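/- arXiv:1902.06179 — 11 statements merged into one kernel-verified Lean document; each statement's English description precedes it below -/
import Mathlib

section
/- Let f be a submodular set function on a finite ground set U, let A ⊆ U be a finset, and let o_0, …, o_{l−1} be pairwise distinct elements of U \ A with prefixes Ô_0 = ∅ and Ô_i = {o_0, …, o_{i−1}} for 1 ≤ i ≤ l. Suppose that for each i < l a finset S_i ⊆ A is given. Then f(Ô_l ∪ A) − f(A) ≤ Σ_{i=0}^{l−1} f_{o_i}(S_i), where f_x(S) := f(S ∪ {x}) − f(S) denotes the marginal gain. -/
lemma marginal_mono {U : Type*} [DecidableEq U] (f : Finset U → ℝ)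
    (hsub : ∀ A B : Finset U, f (A ∪ B) + f (A ∩ B) ≤ f A + f B)
    {S T : Finset U} {x : U} (hST : S ⊆ T) (hx : x ∉ T) :
    f (insert x T) - f T ≤ f (insert x S) - f S := by
  have h := hsub (insert x S) T
  have h1 : insert x S ∪ T = insert x T := by
    rw [Finset.insert_union, Finset.union_eq_right.mpr hST]
  have h2 : insert x S ∩ T = S := by
    ext a
    simp only [Finset.mem_inter, Finset.mem_insert]
    constructor
    · rintro ⟨h | h, hT⟩
      · exact absurd (h ▸ hT) hx
      · exact h
    · exact fun h => ⟨Or.inr h, hST h⟩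
  rw [h1, h2] at h
  linarith

theorem greedy_telescoping_bound
    {U : Type*} [Fintype U] [DecidableEq U] (f : Finset U → ℝ)
    (hsub : ∀ A B : Finset U, f (A ∪ B) + f (A ∩ B) ≤ f A + f B)
    (A : Finset U) (l : ℕ) (o : ℕ → U) (S : ℕ → Finset U)
    (ho_notin : ∀ i < l, o i ∉ A)
    (ho_inj : ∀ i < l, ∀ j < l, i ≠ j → o i ≠ o j)
    (hS : ∀ i < l, S i ⊆ A) :
    f ((Finset.range l).image o ∪ A) - f A ≤
      ∑ i ∈ Finset.range l, (f (insert (o i) (S i)) - f (S i)) := by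
  induction l with
  | zero => simp
  | succ n ih =>
    have ih' := ih (fun i hi => ho_notin i (hi.trans (Nat.lt_succ_self n)))
      (fun i hi j hj hij => ho_inj i (hi.trans (Nat.lt_succ_self n))
        j (hj.trans (Nat.lt_succ_self n)) hij)
      (fun i hi => hS i (hi.trans (Nat.lt_succ_self n)))
    rw [Finset.sum_range_succ, Finset.range_add_one, Finset.image_insert]
    set P := (Finset.range n).image o with hP
    have hon : o n ∉ P ∪ A := by
      intro h
      rcases Finset.mem_union.mp h with h | h
      · obtain ⟨i, hi, heq⟩ := Finset.mem_image.mp h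
        have hi' := Finset.mem_range.mp hi
        exact ho_inj i (hi'.trans (Nat.lt_succ_self n)) n (Nat.lt_succ_self n)
          (Nat.ne_of_lt hi') heq
      · exact ho_notin n (Nat.lt_succ_self n) h
    have hstep : f (insert (o n) (P ∪ A)) - f (P ∪ A) ≤
        f (insert (o n) (S n)) - f (S n) :=
      marginal_mono f hsub ((hS n (Nat.lt_succ_self n)).trans
        Finset.subset_union_right) hon
    have : insert (o n) P ∪ A = insert (o n) (P ∪ A) := by
      simp [Finset.insert_union]
    rw [this]
    linarith
end

section
/- Let f be a nonnegative submodular set function on a finite ground set U, let k ≥ 1, and let (a_i), (b_i), (A_i), (B_i) form an interlaced greedy trace of length k for f. Let c be any real number with c ≥ f(A_i) and c ≥ f(B_i) for all 0 ≤ i ≤ k. Then for every finset O ⊆ U with |O| ≤ k, it holds that 4c ≥ f(O \ {a_0}). -/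
open Finset

private lemma submod_expand {U : Type*} [DecidableEq U] (f : Finset U → ℝ)
    (hsub : ∀ A B : Finset U, f (A ∪ B) + f (A ∩ B) ≤ f A + f B) :
    ∀ (T S : Finset U), f (S ∪ T) ≤ f S + ∑ o ∈ T \ S, (f (insert o S) - f S) := by
  intro T
  induction T using Finset.induction with
  | empty => intro S; simp
  | @insert t T' ht ih =>
    intro S
    by_cases hts : t ∈ S
    · have h1 : S ∪ insert t T' = S ∪ T' := by
        ext x; simp only [mem_union, mem_insert]; constructor
        · rintro (h | rfl | h)
          · exact Or.inl h
          · exact Or.inl hts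
          · exact Or.inr h
        · rintro (h | h)
          · exact Or.inl h
          · exact Or.inr (Or.inr h)
      have h2 : insert t T' \ S = T' \ S := by
        ext x; simp only [mem_sdiff, mem_insert]; constructor
        · rintro ⟨h | h, hx⟩
          · exact absurd (h ▸ hts) hx
          · exact ⟨h, hx⟩
        · rintro ⟨h, hx⟩; exact ⟨Or.inr h, hx⟩
      rw [h1, h2]; exact ih S
    · have h1 : S ∪ insert t T' = insert t (S ∪ T') := by
        ext x; simp only [mem_union, mem_insert]; tauto
      have h2 : insert t T' \ S = insert t (T' \ S) := by
        ext x; simp only [mem_sdiff, mem_insert]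
        constructor
        · rintro ⟨rfl | h, hx⟩
          · exact Or.inl rfl
          · exact Or.inr ⟨h, hx⟩
        · rintro (rfl | ⟨h, hx⟩)
          · exact ⟨Or.inl rfl, hts⟩
          · exact ⟨Or.inr h, hx⟩
      have ht' : t ∉ T' \ S := fun h => ht (mem_sdiff.1 h).1
      rw [h1, h2, Finset.sum_insert ht']
      have key := hsub (S ∪ T') (insert t S)
      have hu : (S ∪ T') ∪ insert t S = insert t (S ∪ T') := by
        ext x; simp only [mem_union, mem_insert]; tauto
      have hi : (S ∪ T') ∩ insert t S = S := by
        ext x; simp only [mem_inter, mem_union, mem_insert]; constructor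
        · rintro ⟨hl, hr⟩
          rcases hr with rfl | h
          · rcases hl with h | h
            · exact h
            · exact absurd h ht
          · exact h
        · intro h; exact ⟨Or.inl h, Or.inr h⟩
      rw [hu, hi] at key
      have := ih S
      linarith

private lemma matching_lemma {U : Type*} [DecidableEq U] :
    ∀ (n : ℕ) (T : Finset U) (d : U → ℕ), T.card = n →
      (∀ t : ℕ, (T.filter (fun o => d o ≤ t)).card ≤ t + 1) →
      ∃ σ : U → ℕ, Set.InjOn σ ↑T ∧ ∀ o ∈ T, σ o ≤ d o ∧ σ o < n := by
  intro n
  induction n with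
  | zero =>
    intro T d hc _
    have : T = ∅ := card_eq_zero.1 hc
    subst this
    exact ⟨fun _ => 0, by simp [Set.InjOn], by simp⟩
  | succ n ih =>
    intro T d hc hall
    have hne : T.Nonempty := card_pos.1 (by omega)
    obtain ⟨o₀, ho₀, hmax⟩ := T.exists_max_image d hne
    have hdn : n ≤ d o₀ := by
      have hsub : T ⊆ T.filter (fun o => d o ≤ d o₀) := fun o ho =>
        mem_filter.2 ⟨ho, hmax o ho⟩
      have := (card_le_card hsub).trans (hall (d o₀))
      omega
    obtain ⟨σ, hinj, hb⟩ := ih (T.erase o₀) d (by rw [card_erase_of_mem ho₀, hc]; rfl)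
      (fun t => le_trans (card_le_card (filter_subset_filter _ (erase_subset _ _))) (hall t))
    refine ⟨Function.update σ o₀ n, ?_, ?_⟩
    · intro x hx y hy hxy
      rw [Finset.mem_coe] at hx hy
      by_cases hxo : x = o₀ <;> by_cases hyo : y = o₀
      · rw [hxo, hyo]
      · exfalso
        rw [hxo, Function.update_self, Function.update_of_ne hyo] at hxy
        have := (hb y (mem_erase.2 ⟨hyo, hy⟩)).2
        omega
      · exfalso
        rw [hyo, Function.update_self, Function.update_of_ne hxo] at hxy
        have := (hb x (mem_erase.2 ⟨hxo, hx⟩)).2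
        omega
      · rw [Function.update_of_ne hxo, Function.update_of_ne hyo] at hxy
        exact hinj (Finset.mem_coe.2 (mem_erase.2 ⟨hxo, hx⟩))
          (Finset.mem_coe.2 (mem_erase.2 ⟨hyo, hy⟩)) hxy
    · intro o ho
      by_cases hoo : o = o₀
      · subst hoo
        rw [Function.update_self]
        exact ⟨hdn, Nat.lt_succ_self n⟩
      · rw [Function.update_of_ne hoo]
        have := hb o (mem_erase.2 ⟨hoo, ho⟩)
        exact ⟨this.1, lt_trans this.2 (Nat.lt_succ_self n)⟩

private lemma sum_le_matched {U : Type*} [DecidableEq U] (T : Finset U) (v : U → ℝ)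
    (g : ℕ → ℝ) (d : U → ℕ)
    (hall : ∀ t : ℕ, (T.filter (fun o => d o ≤ t)).card ≤ t + 1)
    (hvg : ∀ o ∈ T, ∀ i, i ≤ d o → i < T.card → v o ≤ g i) :
    ∑ o ∈ T, v o ≤ ∑ i ∈ Finset.range T.card, g i := by
  obtain ⟨σ, hinj, hb⟩ := matching_lemma T.card T d rfl hall
  have h1 : ∑ o ∈ T, v o ≤ ∑ o ∈ T, g (σ o) :=
    Finset.sum_le_sum fun o ho => hvg o ho (σ o) (hb o ho).1 (hb o ho).2
  have himg : T.image σ = Finset.range T.card := by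
    apply Finset.eq_of_subset_of_card_le
    · intro i hi
      obtain ⟨o, ho, rfl⟩ := mem_image.1 hi
      exact mem_range.2 (hb o ho).2
    · rw [card_range, Finset.card_image_of_injOn hinj]
  rw [← himg, Finset.sum_image (fun x hx y hy => hinj (mem_coe.2 hx) (mem_coe.2 hy))]
  exact h1

private lemma side_bound {U : Type*} [DecidableEq U] (f : Finset U → ℝ)
    (hsub : ∀ A B : Finset U, f (A ∪ B) + f (A ∩ B) ≤ f A + f B)
    (k : ℕ) (e : ℕ → U) (Av : U → ℕ → Prop)
    (hg : ∀ i < k, ∀ x, Av x i →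
      f (insert (e i) ((Finset.range i).image e)) - f ((Finset.range i).image e) ≥
        f (insert x ((Finset.range i).image e)) - f ((Finset.range i).image e))
    (T : Finset U) (hTk : T.card ≤ k)
    (hTd : ∀ o ∈ T, o ∉ (Finset.range k).image e)
    (d : U → ℕ)
    (hdAv : ∀ o ∈ T, ∀ i, i ≤ d o → i < k → Av o i)
    (hall : ∀ t : ℕ, (T.filter (fun o => d o ≤ t)).card ≤ t + 1) :
    f ((Finset.range k).image e ∪ T) ≤
      f ((Finset.range k).image e) +
        (f ((Finset.range T.card).image e) - f (∅ : Finset U)) := by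
  set P : ℕ → Finset U := fun i => (Finset.range i).image e with hP
  have hPsucc : ∀ i, P (i + 1) = insert (e i) (P i) := by
    intro i
    simp [hP, Finset.range_add_one]
  have hPsub : ∀ i ≤ k, P i ⊆ P k := fun i hik =>
    image_subset_image (range_subset_range.2 hik)
  have hexp := submod_expand f hsub T (P k)
  have hTS : T \ P k = T := by
    apply sdiff_eq_self_of_disjoint
    exact disjoint_left.2 fun o ho => hTd o ho
  rw [hTS] at hexp
  have hsum : ∑ o ∈ T, (f (insert o (P k)) - f (P k)) ≤
      ∑ i ∈ Finset.range T.card, (f (P (i + 1)) - f (P i)) := by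
    apply sum_le_matched T _ _ d hall
    intro o ho i hid hicard
    have hik : i < k := lt_of_lt_of_le hicard hTk
    have hAv := hdAv o ho i hid hik
    have h1 := hg i hik o hAv
    have h2 := hsub (insert o (P i)) (P k)
    have hoPk : o ∉ P k := hTd o ho
    have hPik : P i ⊆ P k := hPsub i hik.le
    have hu : insert o (P i) ∪ P k = insert o (P k) := by
      ext x; simp only [mem_union, mem_insert]; constructor
      · rintro ((rfl | h) | h)
        · exact Or.inl rfl
        · exact Or.inr (hPik h)
        · exact Or.inr h
      · rintro (rfl | h)
        · exact Or.inl (Or.inl rfl)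
        · exact Or.inr h
    have hi2 : insert o (P i) ∩ P k = P i := by
      ext x; simp only [mem_inter, mem_insert]; constructor
      · rintro ⟨rfl | h, hx⟩
        · exact absurd hx hoPk
        · exact h
      · intro h; exact ⟨Or.inr h, hPik h⟩
    rw [hu, hi2] at h2
    rw [hPsucc i]
    linarith
  have htel : ∑ i ∈ Finset.range T.card, (f (P (i + 1)) - f (P i)) =
      f (P T.card) - f (P 0) := Finset.sum_range_sub (fun i => f (P i)) T.card
  have hP0 : P 0 = ∅ := by simp [hP]
  rw [htel, hP0] at hsum
  linarith

private def minIdx {U : Type*} [DecidableEq U] (k : ℕ) (e : ℕ → U) (o : U) : ℕ :=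
  if h : ((Finset.range k).filter (fun j => e j = o)).Nonempty
  then ((Finset.range k).filter (fun j => e j = o)).min' h else k

private lemma minIdx_le {U : Type*} [DecidableEq U] {k : ℕ} {e : ℕ → U} {o : U}
    {j : ℕ} (hj : j < k) (he : e j = o) : minIdx k e o ≤ j := by
  have hm : j ∈ (Finset.range k).filter (fun j => e j = o) :=
    mem_filter.2 ⟨mem_range.2 hj, he⟩
  rw [minIdx, dif_pos ⟨j, hm⟩]
  exact min'_le _ _ hm

private lemma minIdx_le_k {U : Type*} [DecidableEq U] {k : ℕ} {e : ℕ → U} {o : U} :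
    minIdx k e o ≤ k := by
  rw [minIdx]
  by_cases h : ((Finset.range k).filter (fun j => e j = o)).Nonempty
  · rw [dif_pos h]
    exact le_of_lt (mem_range.1 (mem_filter.1 (min'_mem _ h)).1)
  · rw [dif_neg h]

private lemma minIdx_spec {U : Type*} [DecidableEq U] {k : ℕ} {e : ℕ → U} {o : U}
    (h : minIdx k e o < k) : e (minIdx k e o) = o := by
  by_cases hne : ((Finset.range k).filter (fun j => e j = o)).Nonempty
  · rw [minIdx, dif_pos hne]
    exact (mem_filter.1 (min'_mem _ hne)).2
  · rw [minIdx, dif_neg hne] at h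
    omega

theorem interlace_greedy_minus
    {U : Type*} [Fintype U] [DecidableEq U] (f : Finset U → ℝ)
    (hsub : ∀ A B : Finset U, f (A ∪ B) + f (A ∩ B) ≤ f A + f B)
    (hnn : ∀ A : Finset U, 0 ≤ f A)
    (k : ℕ) (hk : 1 ≤ k) (a b : ℕ → U)
    (ha_inj : ∀ i < k, ∀ j < k, i ≠ j → a i ≠ a j)
    (hb_inj : ∀ i < k, ∀ j < k, i ≠ j → b i ≠ b j)
    (hab : ∀ i < k, ∀ j < k, a i ≠ b j)
    (hgreedyA : ∀ i < k, ∀ x : U,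
      x ∉ (Finset.range i).image a ∪ (Finset.range i).image b →
      f (insert (a i) ((Finset.range i).image a)) - f ((Finset.range i).image a) ≥
        f (insert x ((Finset.range i).image a)) - f ((Finset.range i).image a))
    (hgreedyB : ∀ i < k, ∀ x : U,
      x ∉ (Finset.range (i+1)).image a ∪ (Finset.range i).image b →
      f (insert (b i) ((Finset.range i).image b)) - f ((Finset.range i).image b) ≥
        f (insert x ((Finset.range i).image b)) - f ((Finset.range i).image b))
    (c : ℝ)
    (hcA : ∀ i ≤ k, f ((Finset.range i).image a) ≤ c)
    (hcB : ∀ i ≤ k, f ((Finset.range i).image b) ≤ c) :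
    ∀ O : Finset U, O.card ≤ k → 4 * c ≥ f (O \ {a 0}) := by
  intro O hO
  classical
  set O' : Finset U := O \ {a 0} with hO'def
  have hO'k : O'.card ≤ k := le_trans (card_le_card sdiff_subset) hO
  have hO'a0 : ∀ o ∈ O', o ≠ a 0 := by
    intro o ho
    have := (mem_sdiff.1 ho).2
    simpa using this
  set Ak : Finset U := (Finset.range k).image a with hAkdef
  set Bk : Finset U := (Finset.range k).image b with hBkdef
  -- A side
  set TA : Finset U := O' \ Ak with hTAdef
  have hTAk : TA.card ≤ k := le_trans (card_le_card sdiff_subset) hO'k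
  set dA : U → ℕ := fun o => min (minIdx k b o) (k - 1) with hdAdef
  have hallA : ∀ t : ℕ, (TA.filter (fun o => dA o ≤ t)).card ≤ t + 1 := by
    intro t
    by_cases hkt : k ≤ t + 1
    · exact le_trans (le_trans (card_le_card (filter_subset _ _)) hTAk) hkt
    · push_neg at hkt
      have hstep : ∀ o ∈ TA.filter (fun o => dA o ≤ t), b (dA o) = o := by
        intro o ho
        have hdt : dA o ≤ t := (mem_filter.1 ho).2
        have hmin : minIdx k b o ≤ t := by
          rw [hdAdef] at hdt
          simp only [min_le_iff] at hdt
          rcases hdt with h | h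
          · exact h
          · omega
        have hlt : minIdx k b o < k := by omega
        have heq : dA o = minIdx k b o := by
          rw [hdAdef]; simp only
          omega
        rw [heq]
        exact minIdx_spec hlt
      apply le_trans (Finset.card_le_card_of_injOn dA
        (fun o ho => mem_range.2 (by have := (mem_filter.1 ho).2; omega)) ?_)
        (le_of_eq (card_range (t + 1)))
      intro x hx y hy hxy
      rw [Finset.mem_coe] at hx hy
      have h1 := hstep x hx
      have h2 := hstep y hy
      rw [← h1, ← h2, hxy]
  have hdAvA : ∀ o ∈ TA, ∀ i, i ≤ dA o → i < k →
      o ∉ (Finset.range i).image a ∪ (Finset.range i).image b := by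
    intro o ho i hid hik hmem
    have hoAk : o ∉ Ak := (mem_sdiff.1 ho).2
    rcases mem_union.1 hmem with h | h
    · exact hoAk (hAkdef ▸ image_subset_image (range_subset_range.2 hik.le) h)
    · obtain ⟨j, hj, hbj⟩ := mem_image.1 h
      rw [mem_range] at hj
      have hjk : j < k := lt_trans hj hik
      have hle : minIdx k b o ≤ j := minIdx_le hjk hbj
      have : dA o ≤ j := by
        rw [hdAdef]; simp only
        omega
      omega
  have boundA : f (Ak ∪ TA) ≤ f Ak + (f ((Finset.range TA.card).image a) - f ∅) :=
    side_bound f hsub k a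
      (fun x i => x ∉ (Finset.range i).image a ∪ (Finset.range i).image b)
      hgreedyA TA hTAk (fun o ho => (mem_sdiff.1 ho).2) dA hdAvA hallA
  -- B side
  set TB : Finset U := O' \ Bk with hTBdef
  have hTBk : TB.card ≤ k := le_trans (card_le_card sdiff_subset) hO'k
  set dB : U → ℕ := fun o => minIdx k a o - 1 with hdBdef
  have hallB : ∀ t : ℕ, (TB.filter (fun o => dB o ≤ t)).card ≤ t + 1 := by
    intro t
    by_cases hkt : k ≤ t + 1
    · exact le_trans (le_trans (card_le_card (filter_subset _ _)) hTBk) hkt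
    · push_neg at hkt
      have hstep : ∀ o ∈ TB.filter (fun o => dB o ≤ t), a (dB o + 1) = o ∧
          minIdx k a o = dB o + 1 := by
        intro o ho
        have hoT : o ∈ TB := (mem_filter.1 ho).1
        have hdt : dB o ≤ t := (mem_filter.1 ho).2
        have hmk : minIdx k a o ≤ k := minIdx_le_k
        have hlt : minIdx k a o < k := by
          rw [hdBdef] at hdt
          simp only at hdt
          omega
        have hspec := minIdx_spec hlt
        have hne0 : minIdx k a o ≠ 0 := by
          intro h0
          exact hO'a0 o (mem_sdiff.1 hoT).1 (by rw [← hspec, h0])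
        have heq : minIdx k a o = dB o + 1 := by
          rw [hdBdef]; simp only
          omega
        exact ⟨by rw [← heq]; exact hspec, heq⟩
      apply le_trans (Finset.card_le_card_of_injOn dB
        (fun o ho => mem_range.2 (by have := (mem_filter.1 ho).2; omega)) ?_)
        (le_of_eq (card_range (t + 1)))
      intro x hx y hy hxy
      rw [Finset.mem_coe] at hx hy
      have h1 := (hstep x hx).1
      have h2 := (hstep y hy).1
      rw [← h1, ← h2, hxy]
  have hdAvB : ∀ o ∈ TB, ∀ i, i ≤ dB o → i < k →
      o ∉ (Finset.range (i+1)).image a ∪ (Finset.range i).image b := by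
    intro o ho i hid hik hmem
    have hoBk : o ∉ Bk := (mem_sdiff.1 ho).2
    rcases mem_union.1 hmem with h | h
    · obtain ⟨j, hj, haj⟩ := mem_image.1 h
      rw [mem_range] at hj
      have hjk : j < k := lt_of_lt_of_le hj hik
      have hle : minIdx k a o ≤ j := minIdx_le hjk haj
      have hne0 : minIdx k a o ≠ 0 := by
        intro h0
        have hlt : minIdx k a o < k := by omega
        have hspec := minIdx_spec hlt
        exact hO'a0 o (mem_sdiff.1 ho).1 (by rw [← hspec, h0])
      rw [hdBdef] at hid
      simp only at hid
      omega
    · exact hoBk (hBkdef ▸ image_subset_image (range_subset_range.2 hik.le) h)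
  have boundB : f (Bk ∪ TB) ≤ f Bk + (f ((Finset.range TB.card).image b) - f ∅) :=
    side_bound f hsub k b
      (fun x i => x ∉ (Finset.range (i+1)).image a ∪ (Finset.range i).image b)
      hgreedyB TB hTBk (fun o ho => (mem_sdiff.1 ho).2) dB hdAvB hallB
  -- combine
  have hAunion : Ak ∪ TA = O' ∪ Ak := by
    rw [hTAdef]
    ext x; simp only [mem_union, mem_sdiff]; tauto
  have hBunion : Bk ∪ TB = O' ∪ Bk := by
    rw [hTBdef]
    ext x; simp only [mem_union, mem_sdiff]; tauto
  have h0 : 0 ≤ f ∅ := hnn ∅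
  have h2A : f (O' ∪ Ak) ≤ 2 * c := by
    have hc1 : f Ak ≤ c := hcA k le_rfl
    have hc2 : f ((Finset.range TA.card).image a) ≤ c := hcA TA.card hTAk
    rw [← hAunion]; linarith
  have h2B : f (O' ∪ Bk) ≤ 2 * c := by
    have hc1 : f Bk ≤ c := hcB k le_rfl
    have hc2 : f ((Finset.range TB.card).image b) ≤ c := hcB TB.card hTBk
    rw [← hBunion]; linarith
  have key := hsub (O' ∪ Ak) (O' ∪ Bk)
  have hi : (O' ∪ Ak) ∩ (O' ∪ Bk) = O' := by
    ext x
    simp only [mem_inter, mem_union]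
    constructor
    · rintro ⟨h1 | h1, h2 | h2⟩
      · exact h1
      · exact h1
      · exact h2
      · exfalso
        obtain ⟨i, hi', hai⟩ := mem_image.1 (hAkdef ▸ h1)
        obtain ⟨j, hj', hbj⟩ := mem_image.1 (hBkdef ▸ h2)
        rw [mem_range] at hi' hj'
        exact hab i hi' j hj' (by rw [hai, hbj])
    · intro h; exact ⟨Or.inl h, Or.inl h⟩
  rw [hi] at key
  have h0' : 0 ≤ f ((O' ∪ Ak) ∪ (O' ∪ Bk)) := hnn _
  have : f O' ≤ 4 * c := by linarith
  exact this
end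

section
/- Let f be a nonnegative submodular set function on a finite ground set U, let k ≥ 1, and let a_0, (d_i), (e_i), (D_i), (E_i) form a seeded interlaced greedy trace of length k for f. Let c be any real number with c ≥ f(D_i) and c ≥ f(E_i) for all 1 ≤ i ≤ k. Then for every finset O ⊆ U with |O| ≤ k, it holds that 4c ≥ f(O ∪ {a_0}). -/
lemma chain_bound {U : Type*} [DecidableEq U] (f : Finset U → ℝ)
    (hsub : ∀ A B : Finset U, f (A ∪ B) + f (A ∩ B) ≤ f A + f B)
    (hnn : ∀ A : Finset U, 0 ≤ f A)
    (k : ℕ) (S : ℕ → Finset U)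
    (hmono : ∀ m, m ≤ k → S m ⊆ S k)
    (hbase : ∀ x : U, f {x} ≤ f (S 1))
    (hpick : ∀ m, 2 ≤ m → m ≤ k → ∀ T : Finset U, T.card = m → (∀ x ∈ T, x ∉ S k) →
      ∃ x ∈ T, f (insert x (S (m-1))) - f (S (m-1)) ≤ f (S m) - f (S (m-1))) :
    ∀ n, n ≤ k → ∀ T : Finset U, T.card = n → (∀ x ∈ T, x ∉ S k) →
      f (S k ∪ T) ≤ f (S k) + f (S (max n 1)) := by
  intro n
  induction n using Nat.strong_induction_on with
  | _ n ih =>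
    match n with
    | 0 =>
      intro _ T hT _
      obtain rfl := Finset.card_eq_zero.mp hT
      simp only [Finset.union_empty]
      have : max 0 1 = 1 := rfl
      rw [this]
      linarith [hnn (S 1)]
    | 1 =>
      intro _ T hT hdisj
      obtain ⟨x, rfl⟩ := Finset.card_eq_one.mp hT
      have hint : S k ∩ {x} = ∅ := by
        ext y
        simp only [Finset.mem_inter, Finset.mem_singleton, Finset.notMem_empty, iff_false]
        rintro ⟨hy, rfl⟩
        exact hdisj y (Finset.mem_singleton_self y) hy
      have hs := hsub (S k) {x}
      rw [hint] at hs
      have : max 1 1 = 1 := rfl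
      rw [this]
      linarith [hnn (∅ : Finset U), hbase x]
    | (m+2) =>
      intro hmk T hT hdisj
      obtain ⟨x, hxT, hx⟩ := hpick (m+2) (by omega) hmk T hT hdisj
      rw [show m + 2 - 1 = m + 1 by omega] at hx
      have hT' : (T.erase x).card = m + 1 := by
        rw [Finset.card_erase_of_mem hxT, hT]
        omega
      have hdisj' : ∀ y ∈ T.erase x, y ∉ S k := fun y hy => hdisj y (Finset.mem_of_mem_erase hy)
      have IH := ih (m+1) (by omega) (by omega) (T.erase x) hT' hdisj'
      have hmax1 : max (m+1) 1 = m + 1 := by omega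
      rw [hmax1] at IH
      have hsub1 : S (m+1) ⊆ S k := hmono (m+1) (by omega)
      have hs := hsub (S k ∪ T.erase x) (insert x (S (m+1)))
      have hu : (S k ∪ T.erase x) ∪ insert x (S (m+1)) = S k ∪ T := by
        ext y
        simp only [Finset.mem_union, Finset.mem_insert, Finset.mem_erase]
        constructor
        · rintro ((h | ⟨-, h⟩) | (rfl | h))
          · exact Or.inl h
          · exact Or.inr h
          · exact Or.inr hxT
          · exact Or.inl (hsub1 h)
        · rintro (h | h)
          · exact Or.inl (Or.inl h)
          · by_cases hy : y = x
            · exact Or.inr (Or.inl hy)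
            · exact Or.inl (Or.inr ⟨hy, h⟩)
      have hi : (S k ∪ T.erase x) ∩ insert x (S (m+1)) = S (m+1) := by
        ext y
        simp only [Finset.mem_inter, Finset.mem_union, Finset.mem_insert, Finset.mem_erase]
        constructor
        · rintro ⟨h1, (rfl | h2)⟩
          · rcases h1 with h | ⟨hne, -⟩
            · exact absurd h (hdisj y hxT)
            · exact absurd rfl hne
          · exact h2
        · intro h
          exact ⟨Or.inl (hsub1 h), Or.inr h⟩
      rw [hu, hi] at hs
      have hmax2 : max (m+2) 1 = m + 2 := by omega
      rw [hmax2]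
      linarith
theorem seeded_interlace_greedy_plus
    {U : Type*} [Fintype U] [DecidableEq U] (f : Finset U → ℝ)
    (hsub : ∀ A B : Finset U, f (A ∪ B) + f (A ∩ B) ≤ f A + f B)
    (hnn : ∀ A : Finset U, 0 ≤ f A)
    (k : ℕ) (hk : 1 ≤ k) (a₀ : U) (d e : ℕ → U)
    (ha₀ : ∀ x : U, f {a₀} ≥ f {x})
    (hd_ne : ∀ i, 1 ≤ i → i < k → d i ≠ a₀)
    (he_ne : ∀ i, 1 ≤ i → i < k → e i ≠ a₀)
    (hd_inj : ∀ i, 1 ≤ i → i < k → ∀ j, 1 ≤ j → j < k → i ≠ j → d i ≠ d j)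
    (he_inj : ∀ i, 1 ≤ i → i < k → ∀ j, 1 ≤ j → j < k → i ≠ j → e i ≠ e j)
    (hde : ∀ i, 1 ≤ i → i < k → ∀ j, 1 ≤ j → j < k → d i ≠ e j)
    (hgreedyD : ∀ i, 1 ≤ i → i < k → ∀ x : U,
      x ∉ insert a₀ ((Finset.Ico 1 i).image d) ∪ insert a₀ ((Finset.Ico 1 i).image e) →
      f (insert (d i) (insert a₀ ((Finset.Ico 1 i).image d))) -
          f (insert a₀ ((Finset.Ico 1 i).image d)) ≥
        f (insert x (insert a₀ ((Finset.Ico 1 i).image d))) -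
          f (insert a₀ ((Finset.Ico 1 i).image d)))
    (hgreedyE : ∀ i, 1 ≤ i → i < k → ∀ x : U,
      x ∉ insert a₀ ((Finset.Ico 1 (i+1)).image d) ∪ insert a₀ ((Finset.Ico 1 i).image e) →
      f (insert (e i) (insert a₀ ((Finset.Ico 1 i).image e))) -
          f (insert a₀ ((Finset.Ico 1 i).image e)) ≥
        f (insert x (insert a₀ ((Finset.Ico 1 i).image e))) -
          f (insert a₀ ((Finset.Ico 1 i).image e)))
    (c : ℝ)
    (hcD : ∀ i, 1 ≤ i → i ≤ k → f (insert a₀ ((Finset.Ico 1 i).image d)) ≤ c)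
    (hcE : ∀ i, 1 ≤ i → i ≤ k → f (insert a₀ ((Finset.Ico 1 i).image e)) ≤ c) :
    ∀ O : Finset U, O.card ≤ k → 4 * c ≥ f (O ∪ {a₀}) := by
  intro O hO
  set D : ℕ → Finset U := fun i => insert a₀ ((Finset.Ico 1 i).image d) with hD
  set E : ℕ → Finset U := fun i => insert a₀ ((Finset.Ico 1 i).image e) with hE
  set O' : Finset U := O ∪ {a₀} with hO'
  have haO' : a₀ ∈ O' := by simp [hO']
  -- monotonicity
  have hmonoD : ∀ m, m ≤ k → D m ⊆ D k := fun m hm =>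
    Finset.insert_subset_insert _ (Finset.image_subset_image (Finset.Ico_subset_Ico le_rfl hm))
  have hmonoE : ∀ m, m ≤ k → E m ⊆ E k := fun m hm =>
    Finset.insert_subset_insert _ (Finset.image_subset_image (Finset.Ico_subset_Ico le_rfl hm))
  -- base
  have hD1 : D 1 = {a₀} := by simp [hD]
  have hE1 : E 1 = {a₀} := by simp [hE]
  have hbaseD : ∀ x : U, f {x} ≤ f (D 1) := by rw [hD1]; exact fun x => ha₀ x
  have hbaseE : ∀ x : U, f {x} ≤ f (E 1) := by rw [hE1]; exact fun x => ha₀ x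
  -- Ico insertion
  have hIco : ∀ i : ℕ, 1 ≤ i → Finset.Ico 1 (i+1) = insert i (Finset.Ico 1 i) := by
    intro i hi
    ext j
    simp only [Finset.mem_Ico, Finset.mem_insert]
    omega
  have hDsucc : ∀ i, 1 ≤ i → D (i+1) = insert (d i) (D i) := by
    intro i hi
    simp only [hD, hIco i hi, Finset.image_insert]
    rw [Finset.insert_comm]
  have hEsucc : ∀ i, 1 ≤ i → E (i+1) = insert (e i) (E i) := by
    intro i hi
    simp only [hE, hIco i hi, Finset.image_insert]
    rw [Finset.insert_comm]
  -- pick lemmas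
  have hpickD : ∀ m, 2 ≤ m → m ≤ k → ∀ T : Finset U, T.card = m → (∀ x ∈ T, x ∉ D k) →
      ∃ x ∈ T, f (insert x (D (m-1))) - f (D (m-1)) ≤ f (D m) - f (D (m-1)) := by
    intro m hm2 hmk T hTcard hTdisj
    obtain ⟨i, rfl⟩ : ∃ i, m = i + 1 := ⟨m - 1, by omega⟩
    have hi1 : 1 ≤ i := by omega
    have hik : i < k := by omega
    have hex : ∃ x ∈ T, x ∉ insert a₀ ((Finset.Ico 1 i).image d) ∪ insert a₀ ((Finset.Ico 1 i).image e) := by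
      by_contra hcon
      push_neg at hcon
      have hsubT : T ⊆ (Finset.Ico 1 i).image e := by
        intro x hx
        have hxk := hTdisj x hx
        have hmem := hcon x hx
        simp only [Finset.mem_union, Finset.mem_insert] at hmem
        rcases hmem with (rfl | hxd) | (rfl | hxe)
        · exact absurd (Finset.mem_insert_self _ _) hxk
        · exact absurd (Finset.mem_insert_of_mem
            (Finset.image_subset_image (Finset.Ico_subset_Ico le_rfl hik.le) hxd)) hxk
        · exact absurd (Finset.mem_insert_self _ _) hxk
        · exact hxe
      have h1 := Finset.card_le_card hsubT
      have h2 := Finset.card_image_le (s := Finset.Ico 1 i) (f := e)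
      rw [Nat.card_Ico] at h2
      omega
    obtain ⟨x, hxT, hx⟩ := hex
    refine ⟨x, hxT, ?_⟩
    have hg := hgreedyD i hi1 hik x hx
    rw [show i + 1 - 1 = i by omega, hDsucc i hi1]
    simp only [hD]
    linarith [hg]
  have hpickE : ∀ m, 2 ≤ m → m ≤ k → ∀ T : Finset U, T.card = m → (∀ x ∈ T, x ∉ E k) →
      ∃ x ∈ T, f (insert x (E (m-1))) - f (E (m-1)) ≤ f (E m) - f (E (m-1)) := by
    intro m hm2 hmk T hTcard hTdisj
    obtain ⟨i, rfl⟩ : ∃ i, m = i + 1 := ⟨m - 1, by omega⟩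
    have hi1 : 1 ≤ i := by omega
    have hik : i < k := by omega
    have hex : ∃ x ∈ T, x ∉ insert a₀ ((Finset.Ico 1 (i+1)).image d) ∪ insert a₀ ((Finset.Ico 1 i).image e) := by
      by_contra hcon
      push_neg at hcon
      have hsubT : T ⊆ (Finset.Ico 1 (i+1)).image d := by
        intro x hx
        have hxk := hTdisj x hx
        have hmem := hcon x hx
        simp only [Finset.mem_union, Finset.mem_insert] at hmem
        rcases hmem with (rfl | hxd) | (rfl | hxe)
        · exact absurd (Finset.mem_insert_self _ _) hxk
        · exact hxd
        · exact absurd (Finset.mem_insert_self _ _) hxk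
        · exact absurd (Finset.mem_insert_of_mem
            (Finset.image_subset_image (Finset.Ico_subset_Ico le_rfl hik.le) hxe)) hxk
      have h1 := Finset.card_le_card hsubT
      have h2 := Finset.card_image_le (s := Finset.Ico 1 (i+1)) (f := d)
      rw [Nat.card_Ico] at h2
      omega
    obtain ⟨x, hxT, hx⟩ := hex
    refine ⟨x, hxT, ?_⟩
    have hg := hgreedyE i hi1 hik x hx
    rw [show i + 1 - 1 = i by omega, hEsucc i hi1]
    simp only [hE]
    linarith [hg]
  -- apply chain bound to T_D and T_E
  have hTDsub : O' \ D k ⊆ O := by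
    intro x hx
    rw [Finset.mem_sdiff] at hx
    rcases Finset.mem_union.mp hx.1 with h | h
    · exact h
    · exact absurd (Finset.mem_singleton.mp h ▸ Finset.mem_insert_self a₀ _) hx.2
  have hTEsub : O' \ E k ⊆ O := by
    intro x hx
    rw [Finset.mem_sdiff] at hx
    rcases Finset.mem_union.mp hx.1 with h | h
    · exact h
    · exact absurd (Finset.mem_singleton.mp h ▸ Finset.mem_insert_self a₀ _) hx.2
  have hcardD : (O' \ D k).card ≤ k := le_trans (Finset.card_le_card hTDsub) hO
  have hcardE : (O' \ E k).card ≤ k := le_trans (Finset.card_le_card hTEsub) hO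
  have hboundD := chain_bound f hsub hnn k D hmonoD hbaseD hpickD (O' \ D k).card hcardD
    (O' \ D k) rfl (fun x hx => (Finset.mem_sdiff.mp hx).2)
  have hboundE := chain_bound f hsub hnn k E hmonoE hbaseE hpickE (O' \ E k).card hcardE
    (O' \ E k) rfl (fun x hx => (Finset.mem_sdiff.mp hx).2)
  rw [Finset.union_sdiff_self_eq_union] at hboundD hboundE
  -- bound both halves by 2c
  have hDkc : f (D k) ≤ c := hcD k hk le_rfl
  have hEkc : f (E k) ≤ c := hcE k hk le_rfl
  have hDmc : f (D (max (O' \ D k).card 1)) ≤ c :=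
    hcD _ (le_max_right _ _) (max_le hcardD hk)
  have hEmc : f (E (max (O' \ E k).card 1)) ≤ c :=
    hcE _ (le_max_right _ _) (max_le hcardE hk)
  have hDO' : f (D k ∪ O') ≤ 2 * c := by linarith
  have hEO' : f (E k ∪ O') ≤ 2 * c := by linarith
  -- combine
  have hcap : (D k ∪ O') ∩ (E k ∪ O') = O' := by
    ext x
    simp only [Finset.mem_inter, Finset.mem_union]
    constructor
    · rintro ⟨hxD | hxO, hxE | hxO'⟩
      · -- x ∈ D k and x ∈ E k → x = a₀
        simp only [hD, Finset.mem_insert, Finset.mem_image, Finset.mem_Ico] at hxD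
        simp only [hE, Finset.mem_insert, Finset.mem_image, Finset.mem_Ico] at hxE
        rcases hxD with rfl | ⟨j, ⟨hj1, hj2⟩, rfl⟩
        · exact haO'
        rcases hxE with hja | ⟨j', ⟨hj1', hj2'⟩, hje⟩
        · exact absurd hja (hd_ne j hj1 hj2)
        · exact absurd hje.symm (hde j hj1 hj2 j' hj1' hj2')
      · exact hxO'
      · exact hxO
      · exact hxO
    · intro h
      exact ⟨Or.inr h, Or.inr h⟩
  have hfin := hsub (D k ∪ O') (E k ∪ O')
  rw [hcap] at hfin
  have hnn2 := hnn ((D k ∪ O') ∪ (E k ∪ O'))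
  show 4 * c ≥ f O'
  linarith
end

section
/- (Approximation ratio of InterlaceGreedy.) Let f be a nonnegative submodular set function on a finite ground set U and let k ≥ 1. Let (a_i), (b_i), (A_i), (B_i) form an interlaced greedy trace of length k for f, and let a_0, (d_i), (e_i), (D_i), (E_i) form a seeded interlaced greedy trace of length k for f with the same initial element a_0. Let c be any real number with c ≥ f(A_i), c ≥ f(B_i) for all 0 ≤ i ≤ k and c ≥ f(D_i), c ≥ f(E_i) for all 1 ≤ i ≤ k. Then for every finset O ⊆ U with |O| ≤ k, it holds that 4c ≥ f(O); in particular, the set returned by InterlaceGreedy has value at least f(O)/4. -/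
section aux
variable {U : Type*} [DecidableEq U]

theorem ig_union_marg_bound (f : Finset U → ℝ)
    (hsub : ∀ A B : Finset U, f (A ∪ B) + f (A ∩ B) ≤ f A + f B)
    (S : Finset U) : ∀ T : Finset U,
    f (S ∪ T) ≤ f S + ∑ o ∈ T \ S, (f (insert o S) - f S) := by
  intro T
  induction T using Finset.induction_on with
  | empty => simp
  | @insert o T hoT ih =>
    by_cases hoS : o ∈ S
    · have h1 : S ∪ insert o T = S ∪ T := by
        ext x; simp only [Finset.mem_union, Finset.mem_insert]
        constructor
        · rintro (h | rfl | h) <;> simp_all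
        · rintro (h | h) <;> simp_all
      have h2 : insert o T \ S = T \ S := by
        ext x; simp only [Finset.mem_sdiff, Finset.mem_insert]
        constructor
        · rintro ⟨rfl | h, h2⟩ <;> simp_all
        · rintro ⟨h, h2⟩; exact ⟨Or.inr h, h2⟩
      rw [h1, h2]; exact ih
    · have key := hsub (S ∪ T) (insert o S)
      have hu : (S ∪ T) ∪ insert o S = S ∪ insert o T := by
        ext x; simp only [Finset.mem_union, Finset.mem_insert]; tauto
      have hi : (S ∪ T) ∩ insert o S = S := by
        ext x; simp only [Finset.mem_inter, Finset.mem_union, Finset.mem_insert]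
        constructor
        · rintro ⟨h1 | h1, rfl | h2⟩ <;> simp_all
        · intro h; exact ⟨Or.inl h, Or.inr h⟩
      have hsd : insert o T \ S = insert o (T \ S) := by
        ext x; simp only [Finset.mem_sdiff, Finset.mem_insert]
        constructor
        · rintro ⟨rfl | h, h2⟩ <;> simp_all
        · rintro (rfl | ⟨h1, h2⟩) <;> simp_all
      have honotin : o ∉ T \ S := fun h => hoT (Finset.mem_sdiff.1 h).1
      rw [hsd, Finset.sum_insert honotin]
      rw [hu, hi] at key
      linarith

theorem ig_marg_anti (f : Finset U → ℝ)
    (hsub : ∀ A B : Finset U, f (A ∪ B) + f (A ∩ B) ≤ f A + f B)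
    {C C' : Finset U} (hCC : C ⊆ C') {o : U} (ho : o ∉ C') :
    f (insert o C') - f C' ≤ f (insert o C) - f C := by
  have key := hsub (insert o C) C'
  have hu : insert o C ∪ C' = insert o C' := by
    rw [Finset.insert_union, Finset.union_eq_right.2 hCC]
  have hi : insert o C ∩ C' = C := by
    ext x; simp only [Finset.mem_inter, Finset.mem_insert]
    constructor
    · rintro ⟨rfl | h, h2⟩ <;> simp_all
    · intro h; exact ⟨Or.inr h, hCC h⟩
  rw [hu, hi] at key
  linarith

theorem ig_anti_of_succ (g : ℕ → ℝ) (n : ℕ) (h : ∀ i, i + 1 < n → g (i + 1) ≤ g i) :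
    ∀ i j, i ≤ j → j < n → g j ≤ g i := by
  intro i j hij hjn
  induction j with
  | zero => simp_all
  | succ m ihm =>
    rcases Nat.eq_or_lt_of_le hij with rfl | hlt
    · exact le_refl _
    · exact le_trans (h m hjn) (ihm (Nat.lt_succ_iff.1 hlt) (Nat.lt_of_succ_lt hjn))

theorem ig_core_sum (v : U → ℝ) (g : ℕ → ℝ) (n : ℕ)
    (hanti : ∀ i j, i ≤ j → j < n → g j ≤ g i) :
    ∀ (T : Finset U) (dl : U → ℕ),
      (∀ o ∈ T, dl o < n) → (∀ o ∈ T, v o ≤ g (dl o)) →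
      (∀ t, (T.filter fun o => dl o < t).card ≤ t) →
      ∑ o ∈ T, v o ≤ ∑ t ∈ Finset.range T.card, g t := by
  intro T
  induction T using Finset.strongInduction with
  | _ T ih =>
    intro dl hdl hv hcount
    rcases T.eq_empty_or_nonempty with rfl | hne
    · simp
    · obtain ⟨o, hoT, hmax⟩ := Finset.exists_max_image T dl hne
      have hfil : T.filter (fun x => dl x < dl o + 1) = T :=
        Finset.filter_true_of_mem (fun x hx => Nat.lt_succ_of_le (hmax x hx))
      have hcard : T.card ≤ dl o + 1 := by
        conv_lhs => rw [← hfil]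
        exact hcount _
      have h1 : T.card - 1 ≤ dl o := by omega
      have hvo : v o ≤ g (T.card - 1) :=
        le_trans (hv o hoT) (hanti _ _ h1 (hdl o hoT))
      have herase := ih (T.erase o) (Finset.erase_ssubset hoT) dl
        (fun x hx => hdl x (Finset.mem_of_mem_erase hx))
        (fun x hx => hv x (Finset.mem_of_mem_erase hx))
        (fun t => le_trans (Finset.card_le_card
          (Finset.filter_subset_filter _ (Finset.erase_subset _ _))) (hcount t))
      have hc : (T.erase o).card = T.card - 1 := Finset.card_erase_of_mem hoT
      have hsplit : ∑ x ∈ T, v x = v o + ∑ x ∈ T.erase o, v x :=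
        (Finset.add_sum_erase T v hoT).symm
      have hrange : ∑ t ∈ Finset.range T.card, g t
          = ∑ t ∈ Finset.range (T.card - 1), g t + g (T.card - 1) := by
        have hpos : T.card = (T.card - 1) + 1 := by
          have := Finset.card_pos.2 hne; omega
        rw [hpos, Finset.sum_range_succ]
        simp
      rw [hc] at herase
      rw [hsplit, hrange]
      linarith

theorem ig_side_bound (f : Finset U → ℝ)
    (hsub : ∀ A B : Finset U, f (A ∪ B) + f (A ∩ B) ≤ f A + f B)
    (n : ℕ) (C : ℕ → Finset U)
    (hstep : ∀ i < n, C i ⊆ C (i + 1))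
    (hanti : ∀ i j, i ≤ j → j < n →
      f (C (j + 1)) - f (C j) ≤ f (C (i + 1)) - f (C i))
    (T : Finset U) (dl : U → ℕ)
    (hdl : ∀ o ∈ T, dl o < n)
    (hno : ∀ o ∈ T, o ∉ C n)
    (hmarg : ∀ o ∈ T, f (insert o (C (dl o))) - f (C (dl o))
      ≤ f (C (dl o + 1)) - f (C (dl o)))
    (hcount : ∀ t, (T.filter fun o => dl o < t).card ≤ t) :
    f (C n ∪ T) ≤ f (C n) + (f (C T.card) - f (C 0)) := by
  have hmono : ∀ i j, i ≤ j → j ≤ n → C i ⊆ C j := by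
    intro i j hij hjn
    induction j with
    | zero => simp_all
    | succ m ihm =>
      rcases Nat.eq_or_lt_of_le hij with rfl | hlt
      · exact subset_rfl
      · exact subset_trans (ihm (Nat.lt_succ_iff.1 hlt) (le_of_lt hjn))
          (hstep m hjn)
  have key1 := ig_union_marg_bound f hsub (C n) T
  have hTd : T \ C n = T :=
    Finset.sdiff_eq_self_iff_disjoint.2 (Finset.disjoint_left.2 hno)
  rw [hTd] at key1
  have key2 : ∑ o ∈ T, (f (insert o (C n)) - f (C n))
      ≤ ∑ t ∈ Finset.range T.card, (f (C (t + 1)) - f (C t)) := by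
    refine ig_core_sum _ (fun t => f (C (t + 1)) - f (C t)) n hanti T dl hdl
      (fun o ho => ?_) hcount
    exact le_trans
      (ig_marg_anti f hsub (hmono (dl o) n (le_of_lt (hdl o ho)) le_rfl) (hno o ho))
      (hmarg o ho)
  have tel : ∑ t ∈ Finset.range T.card, (f (C (t + 1)) - f (C t))
      = f (C T.card) - f (C 0) := Finset.sum_range_sub (fun t => f (C t)) T.card
  rw [tel] at key2
  linarith

end aux

theorem interlace_greedy_approximation_ratio
    {U : Type*} [Fintype U] [DecidableEq U] (f : Finset U → ℝ)
    (hsub : ∀ A B : Finset U, f (A ∪ B) + f (A ∩ B) ≤ f A + f B)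
    (hnn : ∀ A : Finset U, 0 ≤ f A)
    (k : ℕ) (hk : 1 ≤ k) (a b : ℕ → U) (d e : ℕ → U)
    -- interlaced greedy trace (a, b)
    (ha_inj : ∀ i < k, ∀ j < k, i ≠ j → a i ≠ a j)
    (hb_inj : ∀ i < k, ∀ j < k, i ≠ j → b i ≠ b j)
    (hab : ∀ i < k, ∀ j < k, a i ≠ b j)
    (hgreedyA : ∀ i < k, ∀ x : U,
      x ∉ (Finset.range i).image a ∪ (Finset.range i).image b →
      f (insert (a i) ((Finset.range i).image a)) - f ((Finset.range i).image a) ≥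
        f (insert x ((Finset.range i).image a)) - f ((Finset.range i).image a))
    (hgreedyB : ∀ i < k, ∀ x : U,
      x ∉ (Finset.range (i+1)).image a ∪ (Finset.range i).image b →
      f (insert (b i) ((Finset.range i).image b)) - f ((Finset.range i).image b) ≥
        f (insert x ((Finset.range i).image b)) - f ((Finset.range i).image b))
    -- seeded interlaced greedy trace (a 0, d, e)
    (ha₀ : ∀ x : U, f {a 0} ≥ f {x})
    (hd_ne : ∀ i, 1 ≤ i → i < k → d i ≠ a 0)
    (he_ne : ∀ i, 1 ≤ i → i < k → e i ≠ a 0)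
    (hd_inj : ∀ i, 1 ≤ i → i < k → ∀ j, 1 ≤ j → j < k → i ≠ j → d i ≠ d j)
    (he_inj : ∀ i, 1 ≤ i → i < k → ∀ j, 1 ≤ j → j < k → i ≠ j → e i ≠ e j)
    (hde : ∀ i, 1 ≤ i → i < k → ∀ j, 1 ≤ j → j < k → d i ≠ e j)
    (hgreedyD : ∀ i, 1 ≤ i → i < k → ∀ x : U,
      x ∉ insert (a 0) ((Finset.Ico 1 i).image d) ∪ insert (a 0) ((Finset.Ico 1 i).image e) →
      f (insert (d i) (insert (a 0) ((Finset.Ico 1 i).image d))) -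
          f (insert (a 0) ((Finset.Ico 1 i).image d)) ≥
        f (insert x (insert (a 0) ((Finset.Ico 1 i).image d))) -
          f (insert (a 0) ((Finset.Ico 1 i).image d)))
    (hgreedyE : ∀ i, 1 ≤ i → i < k → ∀ x : U,
      x ∉ insert (a 0) ((Finset.Ico 1 (i+1)).image d) ∪ insert (a 0) ((Finset.Ico 1 i).image e) →
      f (insert (e i) (insert (a 0) ((Finset.Ico 1 i).image e))) -
          f (insert (a 0) ((Finset.Ico 1 i).image e)) ≥
        f (insert x (insert (a 0) ((Finset.Ico 1 i).image e))) -
          f (insert (a 0) ((Finset.Ico 1 i).image e)))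
    (c : ℝ)
    (hcA : ∀ i ≤ k, f ((Finset.range i).image a) ≤ c)
    (hcB : ∀ i ≤ k, f ((Finset.range i).image b) ≤ c)
    (hcD : ∀ i, 1 ≤ i → i ≤ k → f (insert (a 0) ((Finset.Ico 1 i).image d)) ≤ c)
    (hcE : ∀ i, 1 ≤ i → i ≤ k → f (insert (a 0) ((Finset.Ico 1 i).image e)) ≤ c) :
    ∀ O : Finset U, O.card ≤ k → 4 * c ≥ f O := by
  classical
  intro O hO
  have hfempty : f (∅ : Finset U) ≤ c := by simpa using hcA 0 (Nat.zero_le k)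
  by_cases ha0O : a 0 ∈ O
  case neg =>
    -- ===================== CASE 1 : a 0 ∉ O, use traces A and B =====================
    -- ---------- side A ----------
    have boundA : f (O ∪ (Finset.range k).image a) ≤ 2 * c := by
      set dl : U → ℕ := fun x => if h : ∃ j, j < k ∧ b j = x then h.choose else k - 1
        with hdldef
      have dlpos : ∀ x (h : ∃ j, j < k ∧ b j = x), dl x = h.choose := by
        intro x h; rw [hdldef]; exact dif_pos h
      have dlneg : ∀ x, ¬(∃ j, j < k ∧ b j = x) → dl x = k - 1 := by
        intro x h; rw [hdldef]; exact dif_neg h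
      set T : Finset U := O \ (Finset.range k).image a with hTdef
      have hsuccA : ∀ i : ℕ, ((Finset.range (i+1)).image a : Finset U)
          = insert (a i) ((Finset.range i).image a) := by
        intro i; rw [Finset.range_add_one, Finset.image_insert]
      have hmonoA : ∀ i j : ℕ, i ≤ j →
          ((Finset.range i).image a : Finset U) ⊆ (Finset.range j).image a :=
        fun i j hij => Finset.image_subset_image (Finset.range_subset_range.2 hij)
      have hnotinA : ∀ i < k, a i ∉ ((Finset.range i).image a : Finset U) := by
        intro i hi hmem
        obtain ⟨j, hj, hEq⟩ := Finset.mem_image.1 hmem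
        rw [Finset.mem_range] at hj
        exact ha_inj i hi j (hj.trans hi) (by omega) hEq.symm
      have hnotinB : ∀ i ≤ k, ∀ j < k, b j ∉ ((Finset.range i).image b : Finset U) →
          True := fun _ _ _ _ _ => trivial
      -- anti
      have hantiA : ∀ i j : ℕ, i ≤ j → j < k →
          f ((Finset.range (j+1)).image a) - f ((Finset.range j).image a) ≤
          f ((Finset.range (i+1)).image a) - f ((Finset.range i).image a) := by
        refine ig_anti_of_succ (fun i => f ((Finset.range (i+1)).image a)
          - f ((Finset.range i).image a)) k ?_
        intro i hi
        have h1 : f ((Finset.range (i+1+1)).image a) - f ((Finset.range (i+1)).image a)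
            ≤ f (insert (a (i+1)) ((Finset.range i).image a)) - f ((Finset.range i).image a) := by
          rw [hsuccA (i+1)]
          exact ig_marg_anti f hsub (hmonoA i (i+1) (Nat.le_succ i)) (hnotinA (i+1) hi)
        have h2 := hgreedyA i (by omega) (a (i+1)) ?_
        · rw [hsuccA i] at h1 ⊢; linarith
        · rw [Finset.mem_union]
          rintro (hmem | hmem)
          · obtain ⟨j, hj, hEq⟩ := Finset.mem_image.1 hmem
            rw [Finset.mem_range] at hj
            exact ha_inj (i+1) hi j (by omega) (by omega) hEq.symm
          · obtain ⟨j, hj, hEq⟩ := Finset.mem_image.1 hmem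
            rw [Finset.mem_range] at hj
            exact hab (i+1) hi j (by omega) hEq.symm
      -- dl < k
      have hdlA : ∀ o ∈ T, dl o < k := by
        intro o _
        by_cases h : ∃ j, j < k ∧ b j = o
        · rw [dlpos o h]; exact h.choose_spec.1
        · rw [dlneg o h]; omega
      have hnoA : ∀ o ∈ T, o ∉ ((Finset.range k).image a : Finset U) := by
        intro o ho; exact (Finset.mem_sdiff.1 ho).2
      -- marg
      have hmargA : ∀ o ∈ T,
          f (insert o ((Finset.range (dl o)).image a)) - f ((Finset.range (dl o)).image a)
          ≤ f ((Finset.range (dl o + 1)).image a) - f ((Finset.range (dl o)).image a) := by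
        intro o hoT
        have honotA : ∀ i ≤ k, o ∉ ((Finset.range i).image a : Finset U) :=
          fun i hi hm => hnoA o hoT (hmonoA i k hi hm)
        rw [hsuccA (dl o)]
        by_cases h : ∃ j, j < k ∧ b j = o
        · obtain ⟨hjk, hbj⟩ := h.choose_spec
          rw [dlpos o h]
          refine hgreedyA _ hjk o ?_
          rw [Finset.mem_union]
          rintro (hmem | hmem)
          · exact honotA _ (le_of_lt hjk) (hmonoA _ _ le_rfl hmem)
          · obtain ⟨j', hj', hEq⟩ := Finset.mem_image.1 hmem
            rw [Finset.mem_range] at hj'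
            exact hb_inj j' (hj'.trans hjk) h.choose hjk (by omega) (hEq.trans hbj.symm)
        · rw [dlneg o h]
          refine hgreedyA _ (by omega) o ?_
          rw [Finset.mem_union]
          rintro (hmem | hmem)
          · exact honotA _ (by omega) hmem
          · obtain ⟨j', hj', hEq⟩ := Finset.mem_image.1 hmem
            rw [Finset.mem_range] at hj'
            exact h ⟨j', by omega, hEq⟩
      -- count
      have hcountA : ∀ t, (T.filter fun o => dl o < t).card ≤ t := by
        intro t
        by_cases hkt : k ≤ t
        · calc (T.filter fun o => dl o < t).card ≤ T.card :=
                Finset.card_le_card (Finset.filter_subset _ _)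
            _ ≤ O.card := Finset.card_le_card Finset.sdiff_subset
            _ ≤ k := hO
            _ ≤ t := hkt
        · have hsubT : (T.filter fun o => dl o < t) ⊆ (Finset.range t).image b := by
            intro x hx
            obtain ⟨hxT, hxdl⟩ := Finset.mem_filter.1 hx
            by_cases h : ∃ j, j < k ∧ b j = x
            · rw [dlpos x h] at hxdl
              exact Finset.mem_image.2 ⟨h.choose, Finset.mem_range.2 hxdl, h.choose_spec.2⟩
            · rw [dlneg x h] at hxdl; omega
          calc (T.filter fun o => dl o < t).card
              ≤ ((Finset.range t).image b).card := Finset.card_le_card hsubT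
            _ ≤ t := le_trans Finset.card_image_le (le_of_eq (Finset.card_range t))
      have H := ig_side_bound f hsub k (fun i => (Finset.range i).image a)
        (fun i _ => hmonoA i (i+1) (Nat.le_succ i)) hantiA T dl hdlA hnoA hmargA hcountA
      have hU : ((Finset.range k).image a : Finset U) ∪ T = O ∪ (Finset.range k).image a := by
        rw [hTdef, Finset.union_sdiff_self_eq_union, Finset.union_comm]
      rw [hU] at H
      have hTk : T.card ≤ k := le_trans (Finset.card_le_card Finset.sdiff_subset) hO
      have h1 : f ((Finset.range T.card).image a) ≤ c := hcA _ hTk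
      have h2 : f ((Finset.range k).image a) ≤ c := hcA k le_rfl
      have h3 : (0:ℝ) ≤ f ((Finset.range 0).image a) := hnn _
      linarith
    -- ---------- side B ----------
    have boundB : f (O ∪ (Finset.range k).image b) ≤ 2 * c := by
      set dl : U → ℕ := fun x => if h : ∃ j, j < k ∧ a j = x then h.choose - 1 else k - 1
        with hdldef
      have dlpos : ∀ x (h : ∃ j, j < k ∧ a j = x), dl x = h.choose - 1 := by
        intro x h; rw [hdldef]; exact dif_pos h
      have dlneg : ∀ x, ¬(∃ j, j < k ∧ a j = x) → dl x = k - 1 := by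
        intro x h; rw [hdldef]; exact dif_neg h
      set T : Finset U := O \ (Finset.range k).image b with hTdef
      have hsuccB : ∀ i : ℕ, ((Finset.range (i+1)).image b : Finset U)
          = insert (b i) ((Finset.range i).image b) := by
        intro i; rw [Finset.range_add_one, Finset.image_insert]
      have hmonoB : ∀ i j : ℕ, i ≤ j →
          ((Finset.range i).image b : Finset U) ⊆ (Finset.range j).image b :=
        fun i j hij => Finset.image_subset_image (Finset.range_subset_range.2 hij)
      have hnotinB : ∀ i < k, b i ∉ ((Finset.range i).image b : Finset U) := by
        intro i hi hmem
        obtain ⟨j, hj, hEq⟩ := Finset.mem_image.1 hmem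
        rw [Finset.mem_range] at hj
        exact hb_inj i hi j (hj.trans hi) (by omega) hEq.symm
      have hantiB : ∀ i j : ℕ, i ≤ j → j < k →
          f ((Finset.range (j+1)).image b) - f ((Finset.range j).image b) ≤
          f ((Finset.range (i+1)).image b) - f ((Finset.range i).image b) := by
        refine ig_anti_of_succ (fun i => f ((Finset.range (i+1)).image b)
          - f ((Finset.range i).image b)) k ?_
        intro i hi
        have h1 : f ((Finset.range (i+1+1)).image b) - f ((Finset.range (i+1)).image b)
            ≤ f (insert (b (i+1)) ((Finset.range i).image b)) - f ((Finset.range i).image b) := by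
          rw [hsuccB (i+1)]
          exact ig_marg_anti f hsub (hmonoB i (i+1) (Nat.le_succ i)) (hnotinB (i+1) hi)
        have h2 := hgreedyB i (by omega) (b (i+1)) ?_
        · rw [hsuccB i] at h1 ⊢; linarith
        · rw [Finset.mem_union]
          rintro (hmem | hmem)
          · obtain ⟨j, hj, hEq⟩ := Finset.mem_image.1 hmem
            rw [Finset.mem_range] at hj
            exact hab j (by omega) (i+1) hi hEq
          · obtain ⟨j, hj, hEq⟩ := Finset.mem_image.1 hmem
            rw [Finset.mem_range] at hj
            exact hb_inj (i+1) hi j (by omega) (by omega) hEq.symm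
      have hdlB : ∀ o ∈ T, dl o < k := by
        intro o _
        by_cases h : ∃ j, j < k ∧ a j = o
        · rw [dlpos o h]; have := h.choose_spec.1; omega
        · rw [dlneg o h]; omega
      have hnoB : ∀ o ∈ T, o ∉ ((Finset.range k).image b : Finset U) := by
        intro o ho; exact (Finset.mem_sdiff.1 ho).2
      have hmargB : ∀ o ∈ T,
          f (insert o ((Finset.range (dl o)).image b)) - f ((Finset.range (dl o)).image b)
          ≤ f ((Finset.range (dl o + 1)).image b) - f ((Finset.range (dl o)).image b) := by
        intro o hoT
        have hoO : o ∈ O := (Finset.mem_sdiff.1 hoT).1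
        have honotB : ∀ i ≤ k, o ∉ ((Finset.range i).image b : Finset U) :=
          fun i hi hm => hnoB o hoT (hmonoB i k hi hm)
        rw [hsuccB (dl o)]
        by_cases h : ∃ j, j < k ∧ a j = o
        · obtain ⟨hjk, haj⟩ := h.choose_spec
          have hjpos : 1 ≤ h.choose := by
            rcases Nat.eq_zero_or_pos h.choose with h0 | h1
            · have hax : a 0 = o := by rw [← h0]; exact haj
              exact absurd (ha0O) (by rw [hax]; exact fun hc => hc hoO)
            · exact h1
          rw [dlpos o h]
          refine hgreedyB _ (by omega) o ?_
          rw [Finset.mem_union]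
          rintro (hmem | hmem)
          · have heq : h.choose - 1 + 1 = h.choose := by omega
            rw [heq] at hmem
            obtain ⟨j', hj', hEq⟩ := Finset.mem_image.1 hmem
            rw [Finset.mem_range] at hj'
            exact ha_inj j' (by omega) h.choose hjk (by omega) (hEq.trans haj.symm)
          · exact honotB (h.choose - 1) (by omega) hmem
        · rw [dlneg o h]
          refine hgreedyB _ (by omega) o ?_
          rw [Finset.mem_union]
          rintro (hmem | hmem)
          · have heq : k - 1 + 1 = k := by omega
            rw [heq] at hmem
            obtain ⟨j', hj', hEq⟩ := Finset.mem_image.1 hmem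
            rw [Finset.mem_range] at hj'
            exact h ⟨j', by omega, hEq⟩
          · exact honotB (k-1) (by omega) hmem
      have hcountB : ∀ t, (T.filter fun o => dl o < t).card ≤ t := by
        intro t
        by_cases hkt : k ≤ t
        · calc (T.filter fun o => dl o < t).card ≤ T.card :=
                Finset.card_le_card (Finset.filter_subset _ _)
            _ ≤ O.card := Finset.card_le_card Finset.sdiff_subset
            _ ≤ k := hO
            _ ≤ t := hkt
        · have hsubT : (T.filter fun o => dl o < t) ⊆ (Finset.Ico 1 (t+1)).image a := by
            intro x hx
            obtain ⟨hxT, hxdl⟩ := Finset.mem_filter.1 hx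
            have hxO : x ∈ O := (Finset.mem_sdiff.1 hxT).1
            by_cases h : ∃ j, j < k ∧ a j = x
            · rw [dlpos x h] at hxdl
              have hjpos : 1 ≤ h.choose := by
                by_contra h0
                have h0' : h.choose = 0 := by omega
                have hax : a 0 = x := by rw [← h0']; exact h.choose_spec.2
                exact ha0O (by rw [hax]; exact hxO)
              exact Finset.mem_image.2 ⟨h.choose, Finset.mem_Ico.2 ⟨hjpos, by omega⟩,
                h.choose_spec.2⟩
            · rw [dlneg x h] at hxdl; omega
          calc (T.filter fun o => dl o < t).card
              ≤ ((Finset.Ico 1 (t+1)).image a).card := Finset.card_le_card hsubT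
            _ ≤ t := le_trans Finset.card_image_le (by rw [Nat.card_Ico]; omega)
      have H := ig_side_bound f hsub k (fun i => (Finset.range i).image b)
        (fun i _ => hmonoB i (i+1) (Nat.le_succ i)) hantiB T dl hdlB hnoB hmargB hcountB
      have hU : ((Finset.range k).image b : Finset U) ∪ T = O ∪ (Finset.range k).image b := by
        rw [hTdef, Finset.union_sdiff_self_eq_union, Finset.union_comm]
      rw [hU] at H
      have hTk : T.card ≤ k := le_trans (Finset.card_le_card Finset.sdiff_subset) hO
      have h1 : f ((Finset.range T.card).image b) ≤ c := hcB _ hTk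
      have h2 : f ((Finset.range k).image b) ≤ c := hcB k le_rfl
      have h3 : (0:ℝ) ≤ f ((Finset.range 0).image b) := hnn _
      linarith
    -- ---------- combine ----------
    have hint : (O ∪ (Finset.range k).image a) ∩ (O ∪ (Finset.range k).image b) = O := by
      ext x
      simp only [Finset.mem_inter, Finset.mem_union, Finset.mem_image, Finset.mem_range]
      constructor
      · rintro ⟨hx1 | ⟨i, hi, hEq1⟩, hx2⟩
        · exact hx1
        · rcases hx2 with hx2 | ⟨j, hj, hEq2⟩
          · exact hx2
          · exact absurd (hEq1.trans hEq2.symm) (hab i hi j hj)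
      · intro hx; exact ⟨Or.inl hx, Or.inl hx⟩
    have hcomb := hsub (O ∪ (Finset.range k).image a) (O ∪ (Finset.range k).image b)
    rw [hint] at hcomb
    have hbig := hnn ((O ∪ (Finset.range k).image a) ∪ (O ∪ (Finset.range k).image b))
    linarith
  case pos =>
    -- ===================== CASE 2 : a 0 ∈ O, use seeded traces D and E ================
    set CD : ℕ → Finset U :=
      fun i => if i = 0 then (∅ : Finset U) else insert (a 0) ((Finset.Ico 1 i).image d)
      with hCDdef
    set CE : ℕ → Finset U :=
      fun i => if i = 0 then (∅ : Finset U) else insert (a 0) ((Finset.Ico 1 i).image e)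
      with hCEdef
    have hCD0 : CD 0 = ∅ := by simp [hCDdef]
    have hCE0 : CE 0 = ∅ := by simp [hCEdef]
    have hCDpos : ∀ i, 1 ≤ i → CD i = insert (a 0) ((Finset.Ico 1 i).image d) := by
      intro i hi; rw [hCDdef]; exact if_neg (by omega)
    have hCEpos : ∀ i, 1 ≤ i → CE i = insert (a 0) ((Finset.Ico 1 i).image e) := by
      intro i hi; rw [hCEdef]; exact if_neg (by omega)
    have hCDsucc : ∀ i, 1 ≤ i → CD (i+1) = insert (d i) (CD i) := by
      intro i hi
      rw [hCDpos (i+1) (by omega), hCDpos i hi, Nat.Ico_succ_right_eq_insert_Ico hi,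
        Finset.image_insert, Finset.insert_comm]
    have hCEsucc : ∀ i, 1 ≤ i → CE (i+1) = insert (e i) (CE i) := by
      intro i hi
      rw [hCEpos (i+1) (by omega), hCEpos i hi, Nat.Ico_succ_right_eq_insert_Ico hi,
        Finset.image_insert, Finset.insert_comm]
    have hCD1 : CD 1 = insert (a 0) (CD 0) := by
      rw [hCDpos 1 le_rfl, hCD0, Finset.Ico_self, Finset.image_empty]
    have hCE1 : CE 1 = insert (a 0) (CE 0) := by
      rw [hCEpos 1 le_rfl, hCE0, Finset.Ico_self, Finset.image_empty]
    have hCDmono : ∀ i j, i ≤ j → CD i ⊆ CD j := by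
      intro i j hij
      rcases Nat.eq_zero_or_pos i with rfl | hi
      · rw [hCD0]; exact Finset.empty_subset _
      · rw [hCDpos i hi, hCDpos j (le_trans hi hij)]
        exact Finset.insert_subset_insert _
          (Finset.image_subset_image (Finset.Ico_subset_Ico le_rfl hij))
    have hCEmono : ∀ i j, i ≤ j → CE i ⊆ CE j := by
      intro i j hij
      rcases Nat.eq_zero_or_pos i with rfl | hi
      · rw [hCE0]; exact Finset.empty_subset _
      · rw [hCEpos i hi, hCEpos j (le_trans hi hij)]
        exact Finset.insert_subset_insert _
          (Finset.image_subset_image (Finset.Ico_subset_Ico le_rfl hij))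
    have hCDstep : ∀ i, i < k → CD i ⊆ CD (i+1) := fun i _ => hCDmono i (i+1) (Nat.le_succ i)
    have hCEstep : ∀ i, i < k → CE i ⊆ CE (i+1) := fun i _ => hCEmono i (i+1) (Nat.le_succ i)
    have ha0CD : a 0 ∈ CD k := by rw [hCDpos k hk]; exact Finset.mem_insert_self _ _
    have ha0CE : a 0 ∈ CE k := by rw [hCEpos k hk]; exact Finset.mem_insert_self _ _
    have hdnotinCD : ∀ i j, 1 ≤ i → i < k → i ≥ j → d i ∉ CD j := by
      intro i j h1 h2 hij hmem
      rcases Nat.eq_zero_or_pos j with rfl | hj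
      · rw [hCD0] at hmem; exact absurd hmem (Finset.notMem_empty _)
      · rw [hCDpos j hj] at hmem
        rcases Finset.mem_insert.1 hmem with hEq | hmem
        · exact hd_ne i h1 h2 hEq
        · obtain ⟨j', hj', hEq⟩ := Finset.mem_image.1 hmem
          rw [Finset.mem_Ico] at hj'
          exact hd_inj i h1 h2 j' hj'.1 (by omega) (by omega) hEq.symm
    have henotinCE : ∀ i j, 1 ≤ i → i < k → i ≥ j → e i ∉ CE j := by
      intro i j h1 h2 hij hmem
      rcases Nat.eq_zero_or_pos j with rfl | hj
      · rw [hCE0] at hmem; exact absurd hmem (Finset.notMem_empty _)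
      · rw [hCEpos j hj] at hmem
        rcases Finset.mem_insert.1 hmem with hEq | hmem
        · exact he_ne i h1 h2 hEq
        · obtain ⟨j', hj', hEq⟩ := Finset.mem_image.1 hmem
          rw [Finset.mem_Ico] at hj'
          exact he_inj i h1 h2 j' hj'.1 (by omega) (by omega) hEq.symm
    -- ---------- side D ----------
    have boundD : f (O ∪ CD k) ≤ 2 * c := by
      set dl : U → ℕ := fun x => if h : ∃ j, 1 ≤ j ∧ j < k ∧ e j = x then h.choose else k - 1
        with hdldef
      have dlpos : ∀ x (h : ∃ j, 1 ≤ j ∧ j < k ∧ e j = x), dl x = h.choose := by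
        intro x h; rw [hdldef]; exact dif_pos h
      have dlneg : ∀ x, ¬(∃ j, 1 ≤ j ∧ j < k ∧ e j = x) → dl x = k - 1 := by
        intro x h; rw [hdldef]; exact dif_neg h
      set T : Finset U := O \ CD k with hTdef
      have hantiD : ∀ i j : ℕ, i ≤ j → j < k →
          f (CD (j+1)) - f (CD j) ≤ f (CD (i+1)) - f (CD i) := by
        refine ig_anti_of_succ (fun i => f (CD (i+1)) - f (CD i)) k ?_
        intro i hi
        rcases Nat.eq_zero_or_pos i with rfl | hipos
        · have hd1 : d 1 ∉ CD 1 := hdnotinCD 1 1 le_rfl (by omega) le_rfl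
          have h1 : f (CD (0+1+1)) - f (CD (0+1)) ≤ f (insert (d 1) (CD 0)) - f (CD 0) := by
            rw [show (0:ℕ)+1+1 = 1+1 by rfl, hCDsucc 1 le_rfl]
            exact ig_marg_anti f hsub (by rw [hCD0]; exact Finset.empty_subset _) hd1
          have h2 : f (insert (d 1) (CD 0)) ≤ f (insert (a 0) (CD 0)) := by
            rw [hCD0]
            simpa using ha₀ (d 1)
          have h3 : CD (0+1) = insert (a 0) (CD 0) := hCD1
          rw [h3] at h1 ⊢
          linarith
        · have h1 : f (CD (i+1+1)) - f (CD (i+1)) ≤ f (insert (d (i+1)) (CD i)) - f (CD i) := by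
            rw [hCDsucc (i+1) (by omega)]
            exact ig_marg_anti f hsub (hCDstep i (by omega))
              (hdnotinCD (i+1) (i+1) (by omega) hi le_rfl)
          have h2 := hgreedyD i hipos (by omega) (d (i+1)) ?_
          · rw [← hCDpos i hipos] at h2
            rw [hCDsucc i hipos] at h1 ⊢
            linarith
          · rw [Finset.mem_union]
            rintro (hmem | hmem)
            · exact hdnotinCD (i+1) i (by omega) hi (by omega)
                (by rw [hCDpos i hipos]; exact hmem)
            · rcases Finset.mem_insert.1 hmem with hEq | hmem
              · exact hd_ne (i+1) (by omega) hi hEq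
              · obtain ⟨j', hj', hEq⟩ := Finset.mem_image.1 hmem
                rw [Finset.mem_Ico] at hj'
                exact hde (i+1) (by omega) hi j' hj'.1 (by omega) hEq.symm
      have hdlD : ∀ o ∈ T, dl o < k := by
        intro o _
        by_cases h : ∃ j, 1 ≤ j ∧ j < k ∧ e j = o
        · rw [dlpos o h]; exact h.choose_spec.2.1
        · rw [dlneg o h]; omega
      have hnoD : ∀ o ∈ T, o ∉ CD k := by
        intro o ho; exact (Finset.mem_sdiff.1 ho).2
      have hmargD : ∀ o ∈ T,
          f (insert o (CD (dl o))) - f (CD (dl o))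
          ≤ f (CD (dl o + 1)) - f (CD (dl o)) := by
        intro o hoT
        have honot : o ∉ CD k := hnoD o hoT
        have hone0 : o ≠ a 0 := fun hEq => honot (hEq ▸ ha0CD)
        by_cases h : ∃ j, 1 ≤ j ∧ j < k ∧ e j = o
        · obtain ⟨hj1, hjk, hEqe⟩ := h.choose_spec
          rw [dlpos o h, hCDsucc h.choose hj1, hCDpos h.choose hj1]
          refine hgreedyD h.choose hj1 hjk o ?_
          rw [Finset.mem_union]
          rintro (hmem | hmem)
          · exact honot (hCDmono h.choose k (le_of_lt hjk)
              (by rw [hCDpos h.choose hj1]; exact hmem))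
          · rcases Finset.mem_insert.1 hmem with hEq | hmem
            · exact hone0 hEq
            · obtain ⟨j', hj', hEq⟩ := Finset.mem_image.1 hmem
              rw [Finset.mem_Ico] at hj'
              exact he_inj j' hj'.1 (by omega) h.choose hj1 hjk (by omega)
                (hEq.trans hEqe.symm)
        · rw [dlneg o h]
          rcases Nat.lt_or_ge k 2 with hk2 | hk2
          · have hk1 : k = 1 := by omega
            rw [show k - 1 = 0 by omega, show (0:ℕ)+1 = 1 by rfl, hCD1, hCD0]
            have := ha₀ o
            simp only [insert_empty_eq]
            linarith
          · have h1k : 1 ≤ k - 1 := by omega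
            rw [hCDsucc (k-1) h1k, hCDpos (k-1) h1k]
            refine hgreedyD (k-1) h1k (by omega) o ?_
            rw [Finset.mem_union]
            rintro (hmem | hmem)
            · exact honot (hCDmono (k-1) k (by omega)
                (by rw [hCDpos (k-1) h1k]; exact hmem))
            · rcases Finset.mem_insert.1 hmem with hEq | hmem
              · exact hone0 hEq
              · obtain ⟨j', hj', hEq⟩ := Finset.mem_image.1 hmem
                rw [Finset.mem_Ico] at hj'
                exact h ⟨j', hj'.1, by omega, hEq⟩
      have hcountD : ∀ t, (T.filter fun o => dl o < t).card ≤ t := by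
        intro t
        by_cases hkt : k ≤ t
        · calc (T.filter fun o => dl o < t).card ≤ T.card :=
                Finset.card_le_card (Finset.filter_subset _ _)
            _ ≤ O.card := Finset.card_le_card Finset.sdiff_subset
            _ ≤ k := hO
            _ ≤ t := hkt
        · have hsubT : (T.filter fun o => dl o < t) ⊆ (Finset.Ico 1 t).image e := by
            intro x hx
            obtain ⟨hxT, hxdl⟩ := Finset.mem_filter.1 hx
            by_cases h : ∃ j, 1 ≤ j ∧ j < k ∧ e j = x
            · rw [dlpos x h] at hxdl
              exact Finset.mem_image.2 ⟨h.choose,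
                Finset.mem_Ico.2 ⟨h.choose_spec.1, hxdl⟩, h.choose_spec.2.2⟩
            · rw [dlneg x h] at hxdl; omega
          calc (T.filter fun o => dl o < t).card
              ≤ ((Finset.Ico 1 t).image e).card := Finset.card_le_card hsubT
            _ ≤ t := le_trans Finset.card_image_le (by rw [Nat.card_Ico]; omega)
      have H := ig_side_bound f hsub k CD hCDstep hantiD T dl hdlD hnoD hmargD hcountD
      have hU : CD k ∪ T = O ∪ CD k := by
        rw [hTdef, Finset.union_sdiff_self_eq_union, Finset.union_comm]
      rw [hU] at H
      have hTk : T.card ≤ k := le_trans (Finset.card_le_card Finset.sdiff_subset) hO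
      have h1 : f (CD T.card) ≤ c := by
        rcases Nat.eq_zero_or_pos T.card with h0 | hpos
        · rw [h0, hCD0]; exact hfempty
        · rw [hCDpos T.card hpos]; exact hcD T.card hpos hTk
      have h2 : f (CD k) ≤ c := by rw [hCDpos k hk]; exact hcD k hk le_rfl
      have h3 : (0:ℝ) ≤ f (CD 0) := hnn _
      linarith
    -- ---------- side E ----------
    have boundE : f (O ∪ CE k) ≤ 2 * c := by
      set dl : U → ℕ := fun x => if h : ∃ j, 1 ≤ j ∧ j < k ∧ d j = x then h.choose - 1 else k - 1
        with hdldef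
      have dlpos : ∀ x (h : ∃ j, 1 ≤ j ∧ j < k ∧ d j = x), dl x = h.choose - 1 := by
        intro x h; rw [hdldef]; exact dif_pos h
      have dlneg : ∀ x, ¬(∃ j, 1 ≤ j ∧ j < k ∧ d j = x) → dl x = k - 1 := by
        intro x h; rw [hdldef]; exact dif_neg h
      set T : Finset U := O \ CE k with hTdef
      have hantiE : ∀ i j : ℕ, i ≤ j → j < k →
          f (CE (j+1)) - f (CE j) ≤ f (CE (i+1)) - f (CE i) := by
        refine ig_anti_of_succ (fun i => f (CE (i+1)) - f (CE i)) k ?_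
        intro i hi
        rcases Nat.eq_zero_or_pos i with rfl | hipos
        · have he1 : e 1 ∉ CE 1 := henotinCE 1 1 le_rfl (by omega) le_rfl
          have h1 : f (CE (0+1+1)) - f (CE (0+1)) ≤ f (insert (e 1) (CE 0)) - f (CE 0) := by
            rw [show (0:ℕ)+1+1 = 1+1 by rfl, hCEsucc 1 le_rfl]
            exact ig_marg_anti f hsub (by rw [hCE0]; exact Finset.empty_subset _) he1
          have h2 : f (insert (e 1) (CE 0)) ≤ f (insert (a 0) (CE 0)) := by
            rw [hCE0]
            simpa using ha₀ (e 1)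
          have h3 : CE (0+1) = insert (a 0) (CE 0) := hCE1
          rw [h3] at h1 ⊢
          linarith
        · have h1 : f (CE (i+1+1)) - f (CE (i+1)) ≤ f (insert (e (i+1)) (CE i)) - f (CE i) := by
            rw [hCEsucc (i+1) (by omega)]
            exact ig_marg_anti f hsub (hCEstep i (by omega))
              (henotinCE (i+1) (i+1) (by omega) hi le_rfl)
          have h2 := hgreedyE i hipos (by omega) (e (i+1)) ?_
          · rw [← hCEpos i hipos] at h2
            rw [hCEsucc i hipos] at h1 ⊢
            linarith
          · rw [Finset.mem_union]
            rintro (hmem | hmem)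
            · rcases Finset.mem_insert.1 hmem with hEq | hmem
              · exact he_ne (i+1) (by omega) hi hEq
              · obtain ⟨j', hj', hEq⟩ := Finset.mem_image.1 hmem
                rw [Finset.mem_Ico] at hj'
                exact hde j' hj'.1 (by omega) (i+1) (by omega) hi hEq
            · exact henotinCE (i+1) i (by omega) hi (by omega)
                (by rw [hCEpos i hipos]; exact hmem)
      have hdlE : ∀ o ∈ T, dl o < k := by
        intro o _
        by_cases h : ∃ j, 1 ≤ j ∧ j < k ∧ d j = o
        · rw [dlpos o h]; have := h.choose_spec.2.1; omega
        · rw [dlneg o h]; omega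
      have hnoE : ∀ o ∈ T, o ∉ CE k := by
        intro o ho; exact (Finset.mem_sdiff.1 ho).2
      have hmargE : ∀ o ∈ T,
          f (insert o (CE (dl o))) - f (CE (dl o))
          ≤ f (CE (dl o + 1)) - f (CE (dl o)) := by
        intro o hoT
        have honot : o ∉ CE k := hnoE o hoT
        have hone0 : o ≠ a 0 := fun hEq => honot (hEq ▸ ha0CE)
        by_cases h : ∃ j, 1 ≤ j ∧ j < k ∧ d j = o
        · obtain ⟨hj1, hjk, hEqd⟩ := h.choose_spec
          rcases Nat.lt_or_ge h.choose 2 with hc2 | hc2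
          · -- h.choose = 1, deadline 0, use the seed step
            have hc1 : h.choose = 1 := by omega
            rw [dlpos o h, hc1, show (1:ℕ) - 1 = 0 by rfl, show (0:ℕ)+1 = 1 by rfl,
              hCE1, hCE0]
            have := ha₀ o
            simp only [insert_empty_eq]
            linarith
          · have h1c : 1 ≤ h.choose - 1 := by omega
            rw [dlpos o h, hCEsucc (h.choose - 1) h1c, hCEpos (h.choose - 1) h1c]
            refine hgreedyE (h.choose - 1) h1c (by omega) o ?_
            rw [Finset.mem_union]
            rintro (hmem | hmem)
            · rcases Finset.mem_insert.1 hmem with hEq | hmem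
              · exact hone0 hEq
              · obtain ⟨j', hj', hEq⟩ := Finset.mem_image.1 hmem
                rw [Finset.mem_Ico] at hj'
                have : j' ≠ h.choose := by omega
                exact hd_inj j' hj'.1 (by omega) h.choose hj1 hjk this
                  (hEq.trans hEqd.symm)
            · exact honot (hCEmono (h.choose - 1) k (by omega)
                (by rw [hCEpos (h.choose - 1) h1c]; exact hmem))
        · rw [dlneg o h]
          rcases Nat.lt_or_ge k 2 with hk2 | hk2
          · rw [show k - 1 = 0 by omega, show (0:ℕ)+1 = 1 by rfl, hCE1, hCE0]
            have := ha₀ o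
            simp only [insert_empty_eq]
            linarith
          · have h1k : 1 ≤ k - 1 := by omega
            rw [hCEsucc (k-1) h1k, hCEpos (k-1) h1k]
            refine hgreedyE (k-1) h1k (by omega) o ?_
            rw [Finset.mem_union]
            rintro (hmem | hmem)
            · rcases Finset.mem_insert.1 hmem with hEq | hmem
              · exact hone0 hEq
              · obtain ⟨j', hj', hEq⟩ := Finset.mem_image.1 hmem
                rw [Finset.mem_Ico] at hj'
                exact h ⟨j', hj'.1, by omega, hEq⟩
            · exact honot (hCEmono (k-1) k (by omega)
                (by rw [hCEpos (k-1) h1k]; exact hmem))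
      have hcountE : ∀ t, (T.filter fun o => dl o < t).card ≤ t := by
        intro t
        by_cases hkt : k ≤ t
        · calc (T.filter fun o => dl o < t).card ≤ T.card :=
                Finset.card_le_card (Finset.filter_subset _ _)
            _ ≤ O.card := Finset.card_le_card Finset.sdiff_subset
            _ ≤ k := hO
            _ ≤ t := hkt
        · have hsubT : (T.filter fun o => dl o < t) ⊆ (Finset.Ico 1 (t+1)).image d := by
            intro x hx
            obtain ⟨hxT, hxdl⟩ := Finset.mem_filter.1 hx
            by_cases h : ∃ j, 1 ≤ j ∧ j < k ∧ d j = x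
            · rw [dlpos x h] at hxdl
              have := h.choose_spec.1
              exact Finset.mem_image.2 ⟨h.choose,
                Finset.mem_Ico.2 ⟨h.choose_spec.1, by omega⟩, h.choose_spec.2.2⟩
            · rw [dlneg x h] at hxdl; omega
          calc (T.filter fun o => dl o < t).card
              ≤ ((Finset.Ico 1 (t+1)).image d).card := Finset.card_le_card hsubT
            _ ≤ t := le_trans Finset.card_image_le (by rw [Nat.card_Ico]; omega)
      have H := ig_side_bound f hsub k CE hCEstep hantiE T dl hdlE hnoE hmargE hcountE
      have hU : CE k ∪ T = O ∪ CE k := by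
        rw [hTdef, Finset.union_sdiff_self_eq_union, Finset.union_comm]
      rw [hU] at H
      have hTk : T.card ≤ k := le_trans (Finset.card_le_card Finset.sdiff_subset) hO
      have h1 : f (CE T.card) ≤ c := by
        rcases Nat.eq_zero_or_pos T.card with h0 | hpos
        · rw [h0, hCE0]; exact hfempty
        · rw [hCEpos T.card hpos]; exact hcE T.card hpos hTk
      have h2 : f (CE k) ≤ c := by rw [hCEpos k hk]; exact hcE k hk le_rfl
      have h3 : (0:ℝ) ≤ f (CE 0) := hnn _
      linarith
    -- ---------- combine ----------
    have hint : (O ∪ CD k) ∩ (O ∪ CE k) = O := by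
      ext x
      simp only [Finset.mem_inter, Finset.mem_union]
      constructor
      · rintro ⟨hx1, hx2⟩
        rcases hx1 with hx1 | hx1
        · exact hx1
        rcases hx2 with hx2 | hx2
        · exact hx2
        rw [hCDpos k hk] at hx1
        rw [hCEpos k hk] at hx2
        rcases Finset.mem_insert.1 hx1 with rfl | hx1
        · exact ha0O
        rcases Finset.mem_insert.1 hx2 with rfl | hx2
        · exact ha0O
        obtain ⟨i, hi, hEqd⟩ := Finset.mem_image.1 hx1
        obtain ⟨j, hj, hEqe⟩ := Finset.mem_image.1 hx2
        rw [Finset.mem_Ico] at hi hj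
        exact absurd (hEqd.trans hEqe.symm) (hde i hi.1 (by omega) j hj.1 (by omega))
      · intro hx; exact ⟨Or.inl hx, Or.inl hx⟩
    have hcomb := hsub (O ∪ CD k) (O ∪ CE k)
    rw [hint] at hcomb
    have hbig := hnn ((O ∪ CD k) ∪ (O ∪ CE k))
    linarith
end

section
/- (Threshold comparison step.) Let f be a submodular set function on a finite ground set U, let 0 < δ ≤ 1/2 and τ ≥ 0 be reals, let S' ⊆ S ⊆ U be finsets, let o ∈ U \ S, and let a ∈ U. If f_a(S) ≥ τ and f_o(S') < τ/(1 − δ), then f_o(S) ≤ (1 + 2δ) · f_a(S). -/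
theorem threshold_comparison_step
    {U : Type*} [Fintype U] [DecidableEq U] (f : Finset U → ℝ)
    (hsub : ∀ A B : Finset U, f (A ∪ B) + f (A ∩ B) ≤ f A + f B)
    (δ τ : ℝ) (hδ0 : 0 < δ) (hδ : δ ≤ 1/2) (hτ : 0 ≤ τ)
    (S' S : Finset U) (hS'S : S' ⊆ S)
    (o : U) (ho : o ∉ S) (a : U)
    (ha : f (insert a S) - f S ≥ τ)
    (ho' : f (insert o S') - f S' < τ / (1 - δ)) :
    f (insert o S) - f S ≤ (1 + 2*δ) * (f (insert a S) - f S) := by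
  have h1 : (insert o S') ∪ S = insert o S := by
    ext x; simp [Finset.mem_insert, Finset.mem_union]
    constructor
    · rintro (h|h|h)
      · exact Or.inl h
      · exact Or.inr (hS'S h)
      · exact Or.inr h
    · tauto
  have h2 : (insert o S') ∩ S = S' := by
    ext x; simp [Finset.mem_insert, Finset.mem_inter]
    constructor
    · rintro ⟨h|h, hx⟩
      · exact absurd (h ▸ hx) ho
      · exact h
    · exact fun h => ⟨Or.inr h, hS'S h⟩
  have hsm := hsub (insert o S') S
  rw [h1, h2] at hsm
  have hmono : f (insert o S) - f S ≤ f (insert o S') - f S' := by linarith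
  have hδ1 : 0 < 1 - δ := by linarith
  have hfrac : τ / (1 - δ) ≤ (1 + 2*δ) * τ := by
    rw [div_le_iff₀ hδ1]
    nlinarith [mul_nonneg (mul_nonneg hδ0.le hτ) (by linarith : (0:ℝ) ≤ 1 - 2*δ)]
  have hτa : (1 + 2*δ) * τ ≤ (1 + 2*δ) * (f (insert a S) - f S) := by
    nlinarith
  linarith
end

section
/- (Thresholded greedy telescoping bound.) Let f be a nonnegative submodular set function on a finite ground set U, let 0 < δ < 1/2, M ≥ 0, and k ≥ 1. Let b_0, …, b_{m−1} be pairwise distinct elements of U with prefixes B_0 = ∅, B_i = {b_0, …, b_{i−1}}, and B = B_m, and suppose f_{b_i}(B_i) ≥ 0 for every i < m. Let o_0, …, o_{l−1} be pairwise distinct elements of U \ B with prefixes Ô_i = {o_0, …, o_{i−1}}, and suppose l − m ≤ k. If f_{o_i}(B_i) ≤ (1 + 2δ) · f_{b_i}(B_i) for every i < min(l, m), and f_{o_i}(B) ≤ δM/k for every i with m ≤ i < l, then f(Ô_l ∪ B) − f(B) ≤ (1 + 2δ) · f(B) + δM; equivalently f(Ô_l ∪ B) ≤ (2 + 2δ)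 · f(B) + δM. -/
theorem thresholded_greedy_telescoping_bound
    {U : Type*} [Fintype U] [DecidableEq U] (f : Finset U → ℝ)
    (hsub : ∀ A B : Finset U, f (A ∪ B) + f (A ∩ B) ≤ f A + f B)
    (hnn : ∀ A : Finset U, 0 ≤ f A)
    (δ M : ℝ) (hδ0 : 0 < δ) (hδ : δ < 1/2) (hM : 0 ≤ M)
    (k : ℕ) (hk : 1 ≤ k)
    (m : ℕ) (b : ℕ → U)
    (hb_inj : ∀ i < m, ∀ j < m, i ≠ j → b i ≠ b j)
    (hb_gain : ∀ i < m,
      0 ≤ f (insert (b i) ((Finset.range i).image b)) - f ((Finset.range i).image b))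
    (l : ℕ) (o : ℕ → U)
    (ho_inj : ∀ i < l, ∀ j < l, i ≠ j → o i ≠ o j)
    (ho_notin : ∀ i < l, o i ∉ (Finset.range m).image b)
    (hlm : l - m ≤ k)
    (hcomp : ∀ i < min l m,
      f (insert (o i) ((Finset.range i).image b)) - f ((Finset.range i).image b) ≤
        (1 + 2*δ) *
          (f (insert (b i) ((Finset.range i).image b)) - f ((Finset.range i).image b)))
    (htail : ∀ i, m ≤ i → i < l →
      f (insert (o i) ((Finset.range m).image b)) - f ((Finset.range m).image b) ≤
        δ * M / k) :
    f ((Finset.range l).image o ∪ (Finset.range m).image b) -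
        f ((Finset.range m).image b) ≤
      (1 + 2*δ) * f ((Finset.range m).image b) + δ * M ∧
    f ((Finset.range l).image o ∪ (Finset.range m).image b) ≤
      (2 + 2*δ) * f ((Finset.range m).image b) + δ * M := by
  set B : Finset U := (Finset.range m).image b with hB
  -- marginal monotonicity
  have marg : ∀ (S T : Finset U), S ⊆ T → ∀ x : U, x ∉ T →
      f (insert x T) - f T ≤ f (insert x S) - f S := by
    intro S T hST x hx
    have h := hsub (insert x S) T
    have h1 : insert x S ∪ T = insert x T := by
      ext y; simp [Finset.mem_insert, Finset.mem_union]
      constructor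
      · rintro (h | h | h) <;> [exact Or.inl h; exact Or.inr (hST h); exact Or.inr h]
      · rintro (h | h); exacts [Or.inl h, Or.inr (Or.inr h)]
    have h2 : insert x S ∩ T = S := by
      ext y; simp [Finset.mem_insert, Finset.mem_inter]
      constructor
      · rintro ⟨h | h, hT⟩
        · exact absurd (h ▸ hT) hx
        · exact h
      · intro h; exact ⟨Or.inr h, hST h⟩
    rw [h1, h2] at h
    linarith
  -- subsets B_i ⊆ B and gains
  have hBi_sub : ∀ i, i ≤ m → (Finset.range i).image b ⊆ B := by
    intro i hi
    exact Finset.image_subset_image (Finset.range_subset_range.2 hi)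
  -- the term-by-term bound
  set g : ℕ → ℝ := fun i => f ((Finset.range i).image o ∪ B) with hg
  have hg0 : g 0 = f B := by simp [hg]
  have hstep : ∀ i < l, g (i+1) - g i =
      f (insert (o i) ((Finset.range i).image o ∪ B)) - f ((Finset.range i).image o ∪ B) := by
    intro i hi
    have : (Finset.range (i+1)).image o = insert (o i) ((Finset.range i).image o) := by
      rw [Finset.range_add_one, Finset.image_insert]
    simp [hg, this, Finset.insert_union]
  have ho_not : ∀ i < l, o i ∉ (Finset.range i).image o ∪ B := by
    intro i hi
    simp only [Finset.mem_union, not_or]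
    constructor
    · simp only [Finset.mem_image, Finset.mem_range, not_exists, not_and]
      intro j hj
      exact ho_inj j (hj.trans hi) i hi (Nat.ne_of_lt hj)
    · exact ho_notin i hi
  -- c i : the per-step bound
  set c : ℕ → ℝ := fun i => if i < m then
      (1 + 2*δ) * (f (insert (b i) ((Finset.range i).image b)) - f ((Finset.range i).image b))
    else δ * M / k with hc
  have hterm : ∀ i ∈ Finset.range l, g (i+1) - g i ≤ c i := by
    intro i hi
    rw [Finset.mem_range] at hi
    rw [hstep i hi]
    by_cases him : i < m
    · have hsubi : (Finset.range i).image b ⊆ (Finset.range i).image o ∪ B :=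
        (hBi_sub i him.le).trans Finset.subset_union_right
      have h1 := marg _ _ hsubi (o i) (ho_not i hi)
      have h2 := hcomp i (lt_min hi him)
      simp only [hc, if_pos him]
      linarith
    · push_neg at him
      have hsubi : B ⊆ (Finset.range i).image o ∪ B := Finset.subset_union_right
      have h1 := marg _ _ hsubi (o i) (ho_not i hi)
      have h2 := htail i him hi
      simp only [hc, if_neg (not_lt.2 him)]
      linarith
  have htel : ∑ i ∈ Finset.range l, (g (i+1) - g i) = g l - g 0 :=
    Finset.sum_range_sub g l
  have hsum : g l - f B ≤ ∑ i ∈ Finset.range l, c i := by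
    rw [← hg0, ← htel]
    exact Finset.sum_le_sum hterm
  -- bound the sum of c
  have hd_nn : ∀ i < m, 0 ≤ (1 + 2*δ) *
      (f (insert (b i) ((Finset.range i).image b)) - f ((Finset.range i).image b)) := by
    intro i hi
    exact mul_nonneg (by linarith) (hb_gain i hi)
  have htelb : ∑ i ∈ Finset.range m,
      (f (insert (b i) ((Finset.range i).image b)) - f ((Finset.range i).image b)) =
      f B - f (∅ : Finset U) := by
    calc ∑ i ∈ Finset.range m,
          (f (insert (b i) ((Finset.range i).image b)) - f ((Finset.range i).image b))
        = ∑ i ∈ Finset.range m,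
          (f ((Finset.range (i+1)).image b) - f ((Finset.range i).image b)) := by
          apply Finset.sum_congr rfl
          intro i _
          rw [Finset.range_add_one, Finset.image_insert]
      _ = f ((Finset.range m).image b) - f ((Finset.range 0).image b) :=
          Finset.sum_range_sub (fun i => f ((Finset.range i).image b)) m
      _ = f B - f (∅ : Finset U) := by simp [hB]
  have hcsum : ∑ i ∈ Finset.range l, c i ≤ (1 + 2*δ) * f B + δ * M := by
    have hdMk : 0 ≤ δ * M / k := by positivity
    have hsum1 : ∑ i ∈ Finset.range (min l m), c i ≤ (1 + 2*δ) * f B := by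
      have heq : ∀ i ∈ Finset.range (min l m), c i = (1 + 2*δ) *
          (f (insert (b i) ((Finset.range i).image b)) - f ((Finset.range i).image b)) := by
        intro i hi
        rw [Finset.mem_range, lt_min_iff] at hi
        simp [hc, hi.2]
      rw [Finset.sum_congr rfl heq, ← Finset.mul_sum]
      have hle : ∑ i ∈ Finset.range (min l m),
          (f (insert (b i) ((Finset.range i).image b)) - f ((Finset.range i).image b)) ≤
          f B - f (∅ : Finset U) := by
        rw [← htelb]
        apply Finset.sum_le_sum_of_subset_of_nonneg
        · exact Finset.range_subset_range.2 (min_le_right l m)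
        · intro i hi _
          exact hb_gain i (Finset.mem_range.1 hi)
      have hfe := hnn (∅ : Finset U)
      have h1 : (0:ℝ) ≤ 1 + 2*δ := by linarith
      calc (1 + 2*δ) * ∑ i ∈ Finset.range (min l m),
            (f (insert (b i) ((Finset.range i).image b)) - f ((Finset.range i).image b))
          ≤ (1 + 2*δ) * (f B - f (∅ : Finset U)) := by
            exact mul_le_mul_of_nonneg_left hle h1
        _ ≤ (1 + 2*δ) * f B := by nlinarith
    have hsum2 : ∑ i ∈ Finset.Ico (min l m) l, c i ≤ δ * M := by
      have heq : ∀ i ∈ Finset.Ico (min l m) l, c i = δ * M / k := by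
        intro i hi
        rw [Finset.mem_Ico] at hi
        have : ¬ i < m := by
          intro h
          have : i < min l m := lt_min hi.2 h
          omega
        simp [hc, this]
      rw [Finset.sum_congr rfl heq, Finset.sum_const, Nat.card_Ico, nsmul_eq_mul]
      have hcard : ((l - min l m : ℕ) : ℝ) ≤ (k : ℝ) := by
        have : l - min l m ≤ k := by omega
        exact_mod_cast this
      have hk' : (0:ℝ) < k := by exact_mod_cast hk
      calc ((l - min l m : ℕ) : ℝ) * (δ * M / k) ≤ (k : ℝ) * (δ * M / k) :=
            mul_le_mul_of_nonneg_right hcard hdMk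
        _ = δ * M := by field_simp
    calc ∑ i ∈ Finset.range l, c i
        = ∑ i ∈ Finset.range (min l m), c i + ∑ i ∈ Finset.Ico (min l m) l, c i := by
          rw [Finset.range_eq_Ico, ← Finset.sum_Ico_consecutive c (Nat.zero_le _) (min_le_left l m), ← Finset.range_eq_Ico]
      _ ≤ (1 + 2*δ) * f B + δ * M := add_le_add hsum1 hsum2
  have hmain : f ((Finset.range l).image o ∪ B) - f B ≤ (1 + 2*δ) * f B + δ * M := by
    have : g l = f ((Finset.range l).image o ∪ B) := rfl
    linarith [hsum, hcsum]
  refine ⟨hmain, ?_⟩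
  have := hnn B
  linarith
end

section
/- Let f be a nonnegative submodular set function on a finite ground set U, let δ > 0 and M ≥ 0 be reals, and let O, A, B ⊆ U be finsets with A ∩ B = ∅ and a_0 an element of A. If f(O ∪ A) ≤ (2 + 2δ) · f(A) + δM and f((O \ {a_0}) ∪ B) ≤ (2 + 2δ) · f(B) + δM, then f(O \ {a_0}) ≤ 2(1 + δ) · (f(A) + f(B)) + 2δM. -/
theorem fast_combine_minus
    {U : Type*} [Fintype U] [DecidableEq U] (f : Finset U → ℝ)
    (hsub : ∀ A B : Finset U, f (A ∪ B) + f (A ∩ B) ≤ f A + f B)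
    (hnn : ∀ A : Finset U, 0 ≤ f A)
    (δ M : ℝ) (hδ : 0 < δ) (hM : 0 ≤ M)
    (O A B : Finset U) (hAB : A ∩ B = ∅) (a₀ : U) (ha₀ : a₀ ∈ A)
    (hA : f (O ∪ A) ≤ (2 + 2*δ) * f A + δ * M)
    (hB : f ((O \ {a₀}) ∪ B) ≤ (2 + 2*δ) * f B + δ * M) :
    f (O \ {a₀}) ≤ 2 * (1 + δ) * (f A + f B) + 2 * δ * M := by
  have ha₀B : a₀ ∉ B := by
    intro h
    have : a₀ ∈ A ∩ B := Finset.mem_inter.mpr ⟨ha₀, h⟩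
    simp [hAB] at this
  have hkey : (O ∪ A) ∩ ((O \ {a₀}) ∪ B) = O \ {a₀} := by
    ext x
    simp only [Finset.mem_inter, Finset.mem_union, Finset.mem_sdiff,
      Finset.mem_singleton]
    constructor
    · rintro ⟨h1, h2⟩
      rcases h2 with h2 | h2
      · exact h2
      · have hxA : x ∉ A := by
          intro hxA
          have : x ∈ A ∩ B := Finset.mem_inter.mpr ⟨hxA, h2⟩
          simp [hAB] at this
        refine ⟨h1.resolve_right hxA, ?_⟩
        rintro rfl; exact ha₀B h2
    · exact fun h => ⟨Or.inl h.1, Or.inl h⟩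
  have := hsub (O ∪ A) ((O \ {a₀}) ∪ B)
  rw [hkey] at this
  have hnn' := hnn ((O ∪ A) ∪ ((O \ {a₀}) ∪ B))
  nlinarith [this, hA, hB]
end

section
/- Let f be a nonnegative submodular set function on a finite ground set U, let δ > 0 and M ≥ 0 be reals, and let O, D, E ⊆ U be finsets with D ∩ E = {a_0} for some element a_0. If f(O ∪ D) ≤ (2 + 2δ) · f(D) + δM and f(O ∪ E) ≤ (2 + 2δ) · f(E) + δM, then f(O ∪ {a_0}) ≤ 2(1 + δ) · (f(D) + f(E)) + 2δM. -/
theorem fast_combine_plus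
    {U : Type*} [Fintype U] [DecidableEq U] (f : Finset U → ℝ)
    (hsub : ∀ A B : Finset U, f (A ∪ B) + f (A ∩ B) ≤ f A + f B)
    (hnn : ∀ A : Finset U, 0 ≤ f A)
    (δ M : ℝ) (hδ : 0 < δ) (hM : 0 ≤ M)
    (O D E : Finset U) (a₀ : U) (hDE : D ∩ E = {a₀})
    (hD : f (O ∪ D) ≤ (2 + 2*δ) * f D + δ * M)
    (hE : f (O ∪ E) ≤ (2 + 2*δ) * f E + δ * M) :
    f (O ∪ {a₀}) ≤ 2 * (1 + δ) * (f D + f E) + 2 * δ * M := by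
  have key := hsub (O ∪ D) (O ∪ E)
  have h1 : (O ∪ D) ∩ (O ∪ E) = O ∪ {a₀} := by
    rw [← Finset.union_inter_distrib_left, hDE]
  rw [h1] at key
  have h2 := hnn ((O ∪ D) ∪ (O ∪ E))
  nlinarith [hnn D, hnn E]
end

section
/- (Approximation ratio of FastInterlaceGreedy, proof skeleton.) Let f be a nonnegative submodular set function on a finite ground set U, let 0 < δ < 1/2 and M ≥ 0 be reals, and let O, A, B, D, E ⊆ U be finsets with A ∩ B = ∅ and D ∩ E = {a_0} for some element a_0 ∈ A. Suppose f(O ∪ A) ≤ (2 + 2δ)f(A) + δM, f((O \ {a_0}) ∪ B) ≤ (2 + 2δ)f(B) + δM, f(O ∪ D) ≤ (2 + 2δ)f(D) + δM, and f(O ∪ E) ≤ (2 + 2δ)f(E) + δM. Let c = max{f(A), f(B), f(D), f(E)}, and assume c ≤ f(O) and M ≤ f(O). Then c ≥ (1 − 6δ) · f(O) / 4. -/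
theorem fast_interlace_greedy_ratio
    {U : Type*} [Fintype U] [DecidableEq U] (f : Finset U → ℝ)
    (hsub : ∀ A B : Finset U, f (A ∪ B) + f (A ∩ B) ≤ f A + f B)
    (hnn : ∀ A : Finset U, 0 ≤ f A)
    (δ M : ℝ) (hδ0 : 0 < δ) (hδ : δ < 1/2) (hM : 0 ≤ M)
    (O A B D E : Finset U) (a₀ : U)
    (hAB : A ∩ B = ∅) (hDE : D ∩ E = {a₀}) (ha₀ : a₀ ∈ A)
    (hA : f (O ∪ A) ≤ (2 + 2*δ) * f A + δ * M)
    (hB : f ((O \ {a₀}) ∪ B) ≤ (2 + 2*δ) * f B + δ * M)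
    (hD : f (O ∪ D) ≤ (2 + 2*δ) * f D + δ * M)
    (hE : f (O ∪ E) ≤ (2 + 2*δ) * f E + δ * M)
    (c : ℝ) (hc : c = max (max (f A) (f B)) (max (f D) (f E)))
    (hcO : c ≤ f O) (hMO : M ≤ f O) :
    c ≥ (1 - 6*δ) * f O / 4 := by
  have hcA : f A ≤ c := by rw [hc]; exact le_max_of_le_left (le_max_left _ _)
  have hcB : f B ≤ c := by rw [hc]; exact le_max_of_le_left (le_max_right _ _)
  have hcD : f D ≤ c := by rw [hc]; exact le_max_of_le_right (le_max_left _ _)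
  have hcE : f E ≤ c := by rw [hc]; exact le_max_of_le_right (le_max_right _ _)
  have hfO : f O ≤ 4*c + 4*δ*c + 2*δ*M := by
    by_cases h : a₀ ∈ O
    · -- use D, E pair: (O∪D) ∩ (O∪E) = O ∪ (D∩E) = O ∪ {a₀} = O
      have hint : (O ∪ D) ∩ (O ∪ E) = O := by
        rw [← Finset.union_inter_distrib_left, hDE,
          Finset.union_eq_left.2 (Finset.singleton_subset_iff.2 h)]
      have := hsub (O ∪ D) (O ∪ E)
      rw [hint] at this
      have h0 := hnn ((O ∪ D) ∪ (O ∪ E))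
      nlinarith [this, h0, hD, hE, mul_le_mul_of_nonneg_left hcD hδ0.le,
        mul_le_mul_of_nonneg_left hcE hδ0.le]
    · -- a₀ ∉ O: O \ {a₀} = O; use A, B pair: (O∪A) ∩ (O∪B) = O ∪ (A∩B) = O
      have hOsd : O \ ({a₀} : Finset U) = O := by
        apply Finset.sdiff_eq_self_of_disjoint
        simp [Finset.disjoint_singleton_right, h]
      rw [hOsd] at hB
      have hint : (O ∪ A) ∩ (O ∪ B) = O := by
        rw [← Finset.union_inter_distrib_left, hAB, Finset.union_empty]
      have := hsub (O ∪ A) (O ∪ B)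
      rw [hint] at this
      have h0 := hnn ((O ∪ A) ∪ (O ∪ B))
      nlinarith [this, h0, hA, hB, mul_le_mul_of_nonneg_left hcA hδ0.le,
        mul_le_mul_of_nonneg_left hcB hδ0.le]
  nlinarith [mul_le_mul_of_nonneg_left hcO hδ0.le, mul_le_mul_of_nonneg_left hMO hδ0.le]
end

section
/- (Tight example is submodular.) Let U be a finite type, let k ≥ 1 be a natural number, let O ⊆ U be a finset, and let a, b ∈ U be distinct elements with a ∉ O and b ∉ O. Define f : Finset U → ℝ by: f(C) = 0 if a ∈ C and b ∈ C; f(C) = |C ∩ O|/(2k) + 1/k if exactly one of a, b belongs to C; and f(C) = |C ∩ O|/k if a ∉ C and b ∉ C. Then f is submodular, i.e., f(S ∪ T) + f(S ∩ T) ≤ f(S) + f(T) for all finsets S, T ⊆ U. -/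
theorem tight_example_submodular
    {U : Type*} [Fintype U] [DecidableEq U]
    (k : ℕ) (hk : 1 ≤ k) (O : Finset U) (a b : U)
    (hab : a ≠ b) (haO : a ∉ O) (hbO : b ∉ O)
    (f : Finset U → ℝ)
    (hf_both : ∀ C : Finset U, a ∈ C → b ∈ C → f C = 0)
    (hf_one : ∀ C : Finset U, (a ∈ C ∧ b ∉ C) ∨ (a ∉ C ∧ b ∈ C) →
      f C = (C ∩ O).card / (2 * (k : ℝ)) + 1 / (k : ℝ))
    (hf_none : ∀ C : Finset U, a ∉ C → b ∉ C → f C = (C ∩ O).card / (k : ℝ)) :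
    ∀ S T : Finset U, f (S ∪ T) + f (S ∩ T) ≤ f S + f T := by
  intro S T
  have hk0 : (0:ℝ) < (k:ℝ) := by exact_mod_cast hk
  have h2k : (0:ℝ) < 2 * (k:ℝ) := by linarith
  have e1 : (S ∪ T) ∩ O = (S ∩ O) ∪ (T ∩ O) := by
    ext x; simp only [Finset.mem_inter, Finset.mem_union]; tauto
  have e2 : (S ∩ T) ∩ O = (S ∩ O) ∩ (T ∩ O) := by
    ext x; simp only [Finset.mem_inter]; tauto
  have key := Finset.card_union_add_card_inter (S ∩ O) (T ∩ O)
  set mU : ℝ := (((S ∪ T) ∩ O).card : ℝ) with hmU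
  set mI : ℝ := (((S ∩ T) ∩ O).card : ℝ) with hmI
  set mS : ℝ := ((S ∩ O).card : ℝ) with hmS
  set mT : ℝ := ((T ∩ O).card : ℝ) with hmT
  have hm : mU + mI = mS + mT := by rw [hmU, hmI, hmS, hmT, e1, e2]; exact_mod_cast key
  have hs1 : mI ≤ mS := by
    rw [hmI, hmS]
    exact_mod_cast Finset.card_le_card (by rw [e2]; exact Finset.inter_subset_left)
  have hs2 : mI ≤ mT := by
    rw [hmI, hmT]
    exact_mod_cast Finset.card_le_card (by rw [e2]; exact Finset.inter_subset_right)
  have hu1 : mS ≤ mU := by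
    rw [hmS, hmU]
    exact_mod_cast Finset.card_le_card (by rw [e1]; exact Finset.subset_union_left)
  have hu2 : mT ≤ mU := by
    rw [hmT, hmU]
    exact_mod_cast Finset.card_le_card (by rw [e1]; exact Finset.subset_union_right)
  -- rescaling facts: x / k = x/(2k) + x/(2k)
  have Ek : ∀ x : ℝ, x / (k:ℝ) = x / (2 * (k:ℝ)) + x / (2 * (k:ℝ)) := by
    intro x; field_simp; ring
  have F1 : mI / (2*(k:ℝ)) ≤ mS / (2*(k:ℝ)) := by gcongr
  have F2 : mI / (2*(k:ℝ)) ≤ mT / (2*(k:ℝ)) := by gcongr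
  have F3 : mI / (k:ℝ) ≤ mS / (k:ℝ) := by gcongr
  have F4 : mI / (k:ℝ) ≤ mT / (k:ℝ) := by gcongr
  have F5 : mU / (2*(k:ℝ)) + mI / (2*(k:ℝ)) = mS / (2*(k:ℝ)) + mT / (2*(k:ℝ)) := by
    rw [← add_div, ← add_div, hm]
  have F6 : mU / (k:ℝ) + mI / (k:ℝ) = mS / (k:ℝ) + mT / (k:ℝ) := by
    rw [← add_div, ← add_div, hm]
  have G1 : mI / (k:ℝ) = mI / (2*(k:ℝ)) + mI / (2*(k:ℝ)) := Ek mI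
  have G2 : mS / (k:ℝ) = mS / (2*(k:ℝ)) + mS / (2*(k:ℝ)) := Ek mS
  have G3 : mT / (k:ℝ) = mT / (2*(k:ℝ)) + mT / (2*(k:ℝ)) := Ek mT
  have G4 : mU / (k:ℝ) = mU / (2*(k:ℝ)) + mU / (2*(k:ℝ)) := Ek mU
  -- membership helpers
  by_cases h1 : a ∈ S <;> by_cases h2 : b ∈ S <;> by_cases h3 : a ∈ T <;> by_cases h4 : b ∈ T
  -- 1: TTTT
  · rw [hf_both (S ∪ T) (Finset.mem_union_left T h1) (Finset.mem_union_left T h2),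
        hf_both (S ∩ T) (Finset.mem_inter.mpr ⟨h1, h3⟩) (Finset.mem_inter.mpr ⟨h2, h4⟩),
        hf_both S h1 h2, hf_both T h3 h4]
  -- 2: TTTF
  · rw [hf_both (S ∪ T) (Finset.mem_union_left T h1) (Finset.mem_union_left T h2),
        hf_one (S ∩ T) (Or.inl ⟨Finset.mem_inter.mpr ⟨h1, h3⟩,
          fun h => h4 (Finset.mem_inter.mp h).2⟩),
        hf_both S h1 h2, hf_one T (Or.inl ⟨h3, h4⟩)]
    linarith [F1, F2, F5, G1, G2, G3, G4]
  -- 3: TTFT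
  · rw [hf_both (S ∪ T) (Finset.mem_union_left T h1) (Finset.mem_union_left T h2),
        hf_one (S ∩ T) (Or.inr ⟨fun h => h3 (Finset.mem_inter.mp h).2,
          Finset.mem_inter.mpr ⟨h2, h4⟩⟩),
        hf_both S h1 h2, hf_one T (Or.inr ⟨h3, h4⟩)]
    linarith [F1, F2, F5, G1, G2, G3, G4]
  -- 4: TTFF
  · rw [hf_both (S ∪ T) (Finset.mem_union_left T h1) (Finset.mem_union_left T h2),
        hf_none (S ∩ T) (fun h => h3 (Finset.mem_inter.mp h).2)
          (fun h => h4 (Finset.mem_inter.mp h).2),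
        hf_both S h1 h2, hf_none T h3 h4]
    linarith [F4]
  -- 5: TFTT
  · rw [hf_both (S ∪ T) (Finset.mem_union_left T h1) (Finset.mem_union_right S h4),
        hf_one (S ∩ T) (Or.inl ⟨Finset.mem_inter.mpr ⟨h1, h3⟩,
          fun h => h2 (Finset.mem_inter.mp h).1⟩),
        hf_one S (Or.inl ⟨h1, h2⟩), hf_both T h3 h4]
    linarith [F1, F2, F5, G1, G2, G3, G4]
  -- 6: TFTF
  · rw [hf_one (S ∪ T) (Or.inl ⟨Finset.mem_union_left T h1,
          fun h => (Finset.mem_union.mp h).elim h2 h4⟩),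
        hf_one (S ∩ T) (Or.inl ⟨Finset.mem_inter.mpr ⟨h1, h3⟩,
          fun h => h2 (Finset.mem_inter.mp h).1⟩),
        hf_one S (Or.inl ⟨h1, h2⟩), hf_one T (Or.inl ⟨h3, h4⟩)]
    linarith [F5]
  -- 7: TFFT
  · rw [hf_both (S ∪ T) (Finset.mem_union_left T h1) (Finset.mem_union_right S h4),
        hf_none (S ∩ T) (fun h => h3 (Finset.mem_inter.mp h).2)
          (fun h => h2 (Finset.mem_inter.mp h).1),
        hf_one S (Or.inl ⟨h1, h2⟩), hf_one T (Or.inr ⟨h3, h4⟩)]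
    have hkpos : 0 < 1 / (k:ℝ) := by positivity
    linarith [F1, F2, G1]
  -- 8: TFFF
  · rw [hf_one (S ∪ T) (Or.inl ⟨Finset.mem_union_left T h1,
          fun h => (Finset.mem_union.mp h).elim h2 h4⟩),
        hf_none (S ∩ T) (fun h => h3 (Finset.mem_inter.mp h).2)
          (fun h => h2 (Finset.mem_inter.mp h).1),
        hf_one S (Or.inl ⟨h1, h2⟩), hf_none T h3 h4]
    linarith [F2, F5, G1, G3]
  -- 9: FTTT
  · rw [hf_both (S ∪ T) (Finset.mem_union_right S h3) (Finset.mem_union_left T h2),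
        hf_one (S ∩ T) (Or.inr ⟨fun h => h1 (Finset.mem_inter.mp h).1,
          Finset.mem_inter.mpr ⟨h2, h4⟩⟩),
        hf_one S (Or.inr ⟨h1, h2⟩), hf_both T h3 h4]
    linarith [F1, F2, F5, G1, G2, G3, G4]
  -- 10: FTTF
  · rw [hf_both (S ∪ T) (Finset.mem_union_right S h3) (Finset.mem_union_left T h2),
        hf_none (S ∩ T) (fun h => h1 (Finset.mem_inter.mp h).1)
          (fun h => h4 (Finset.mem_inter.mp h).2),
        hf_one S (Or.inr ⟨h1, h2⟩), hf_one T (Or.inl ⟨h3, h4⟩)]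
    have hkpos : 0 < 1 / (k:ℝ) := by positivity
    linarith [F1, F2, G1]
  -- 11: FTFT
  · rw [hf_one (S ∪ T) (Or.inr ⟨fun h => (Finset.mem_union.mp h).elim h1 h3,
          Finset.mem_union_left T h2⟩),
        hf_one (S ∩ T) (Or.inr ⟨fun h => h1 (Finset.mem_inter.mp h).1,
          Finset.mem_inter.mpr ⟨h2, h4⟩⟩),
        hf_one S (Or.inr ⟨h1, h2⟩), hf_one T (Or.inr ⟨h3, h4⟩)]
    linarith [F5]
  -- 12: FTFF
  · rw [hf_one (S ∪ T) (Or.inr ⟨fun h => (Finset.mem_union.mp h).elim h1 h3,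
          Finset.mem_union_left T h2⟩),
        hf_none (S ∩ T) (fun h => h1 (Finset.mem_inter.mp h).1)
          (fun h => h4 (Finset.mem_inter.mp h).2),
        hf_one S (Or.inr ⟨h1, h2⟩), hf_none T h3 h4]
    linarith [F2, F5, G1, G3]
  -- 13: FFTT
  · rw [hf_both (S ∪ T) (Finset.mem_union_right S h3) (Finset.mem_union_right S h4),
        hf_none (S ∩ T) (fun h => h1 (Finset.mem_inter.mp h).1)
          (fun h => h2 (Finset.mem_inter.mp h).1),
        hf_none S h1 h2, hf_both T h3 h4]
    linarith [F3]
  -- 14: FFTF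
  · rw [hf_one (S ∪ T) (Or.inl ⟨Finset.mem_union_right S h3,
          fun h => (Finset.mem_union.mp h).elim h2 h4⟩),
        hf_none (S ∩ T) (fun h => h1 (Finset.mem_inter.mp h).1)
          (fun h => h2 (Finset.mem_inter.mp h).1),
        hf_none S h1 h2, hf_one T (Or.inl ⟨h3, h4⟩)]
    linarith [F1, F5, G1, G2]
  -- 15: FFFT
  · rw [hf_one (S ∪ T) (Or.inr ⟨fun h => (Finset.mem_union.mp h).elim h1 h3,
          Finset.mem_union_right S h4⟩),
        hf_none (S ∩ T) (fun h => h1 (Finset.mem_inter.mp h).1)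
          (fun h => h2 (Finset.mem_inter.mp h).1),
        hf_none S h1 h2, hf_one T (Or.inr ⟨h3, h4⟩)]
    linarith [F1, F5, G1, G2]
  -- 16: FFFF
  · rw [hf_none (S ∪ T) (fun h => (Finset.mem_union.mp h).elim h1 h3)
          (fun h => (Finset.mem_union.mp h).elim h2 h4),
        hf_none (S ∩ T) (fun h => h1 (Finset.mem_inter.mp h).1)
          (fun h => h2 (Finset.mem_inter.mp h).1),
        hf_none S h1 h2, hf_none T h3 h4]
    linarith [F6]
end

section
/- (Tight example value bound.) Let U be a finite type, let k ≥ 2 be an even natural number, let O ⊆ U be a finset with |O| = k, and let a, b ∈ U be distinct elements with a ∉ O and b ∉ O. Define f : Finset U → ℝ by: f(C) = 0 if a ∈ C and b ∈ C; f(C) = |C ∩ O|/(2k) + 1/k if exactly one of a, b belongs to C; and f(C) = |C ∩ O|/k if a ∉ C and b ∉ C. Then f(O) = 1, and for every finset C ⊆ U containing exactly one of a, b and satisfying |C ∩ O| ≤ k/2, it holds that f(C) ≤ 1/4 + 1/k; in particular f(C)/f(O) ≤ 1/4 + 1/k. -/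
theorem tight_example_value_bound
    {U : Type*} [Fintype U] [DecidableEq U]
    (k : ℕ) (hk : 2 ≤ k) (hkeven : Even k)
    (O : Finset U) (hO : O.card = k) (a b : U)
    (hab : a ≠ b) (haO : a ∉ O) (hbO : b ∉ O)
    (f : Finset U → ℝ)
    (hf_both : ∀ C : Finset U, a ∈ C → b ∈ C → f C = 0)
    (hf_one : ∀ C : Finset U, (a ∈ C ∧ b ∉ C) ∨ (a ∉ C ∧ b ∈ C) →
      f C = (C ∩ O).card / (2 * (k : ℝ)) + 1 / (k : ℝ))
    (hf_none : ∀ C : Finset U, a ∉ C → b ∉ C → f C = (C ∩ O).card / (k : ℝ)) :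
    f O = 1 ∧
      ∀ C : Finset U, ((a ∈ C ∧ b ∉ C) ∨ (a ∉ C ∧ b ∈ C)) →
        (C ∩ O).card ≤ k / 2 →
        f C ≤ 1/4 + 1/(k : ℝ) ∧ f C / f O ≤ 1/4 + 1/(k : ℝ) := by
  have hkpos : (0:ℝ) < k := by positivity
  have hfO : f O = 1 := by
    rw [hf_none O haO hbO, Finset.inter_self, hO]
    field_simp
  refine ⟨hfO, fun C hone hcard => ?_⟩
  have hfC := hf_one C hone
  have hbound : f C ≤ 1/4 + 1/(k:ℝ) := by
    rw [hfC]
    have h1 : ((C ∩ O).card : ℝ) ≤ (k : ℝ) / 2 := by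
      have : ((C ∩ O).card : ℝ) ≤ ((k / 2 : ℕ) : ℝ) := by exact_mod_cast hcard
      refine this.trans ?_
      have := Nat.div_mul_le_self k 2
      have : ((k/2 : ℕ) : ℝ) * 2 ≤ (k : ℝ) := by exact_mod_cast this
      linarith
    have : ((C ∩ O).card : ℝ) / (2 * (k:ℝ)) ≤ 1/4 := by
      rw [div_le_div_iff₀ (by positivity) (by norm_num)]
      linarith
    linarith
  exact ⟨hbound, by rw [hfO, div_one]; exact hbound⟩
end
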